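/- arXiv:1203.3995 — 4 statements merged into one kernel-verified Lean document; each statement's English description precedes it below -/
import Mathlib

section
/- Let n ≥ 2 and let u : ℂⁿ → ℝ be a continuous subharmonic function with 0 ≤ u ≤ 1 and sup_{ℂⁿ} u = 1. Then for every z ∈ ℂⁿ, lim_{r→∞} [u]_r(z) = 1 and lim_{r→∞} [u²]_r(z) = 1. -/
open MeasureTheory Metric Filter

noncomputable section

instance (n : ℕ) : MeasurableSpace (EuclideanSpace ℂ (Fin n)) := borel _
instance (n : ℕ) : BorelSpace (EuclideanSpace ℂ (Fin n)) := ⟨rfl⟩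

/-- For a continuous subharmonic `u : ℂⁿ → ℝ` (`n ≥ 2`) with `0 ≤ u ≤ 1` and `sup u = 1`,
the ball averages of `u` and of `u²` both tend to `1` as the radius tends to infinity,
at every center `z`. -/
theorem ball_averages_tendsto_sup
    (n : ℕ) (hn : 2 ≤ n)
    (u : EuclideanSpace ℂ (Fin n) → ℝ)
    (hcont : Continuous u)
    (h01 : ∀ z, 0 ≤ u z ∧ u z ≤ 1)
    (hsh : ∀ z r, 0 < r → u z ≤ ⨍ w in ball z r, u w)
    (hsup : IsLUB (Set.range u) 1) :
    ∀ z, Tendsto (fun r : ℝ => ⨍ w in ball z r, u w) atTop (nhds 1) ∧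
      Tendsto (fun r : ℝ => ⨍ w in ball z r, (u w) ^ 2) atTop (nhds 1) := by
  haveI : Nonempty (Fin n) := ⟨⟨0, by omega⟩⟩
  haveI : Nontrivial (EuclideanSpace ℂ (Fin n)) := inferInstance
  set N := Module.finrank ℝ (EuclideanSpace ℂ (Fin n)) with hN
  -- basic integrability of continuous functions on balls
  have hint : ∀ (v : EuclideanSpace ℂ (Fin n) → ℝ), Continuous v →
      ∀ (c : EuclideanSpace ℂ (Fin n)) (r : ℝ), IntegrableOn v (ball c r) volume :=
    fun v hv c r =>
      (hv.continuousOn.integrableOn_compact (isCompact_closedBall c r)).mono_set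
        ball_subset_closedBall
  -- positivity of ball volumes
  have hμpos : ∀ (c : EuclideanSpace ℂ (Fin n)) (r : ℝ), 0 < r →
      0 < (volume (ball c r)).toReal := fun c r hr =>
    ENNReal.toReal_pos (measure_ball_pos volume c hr).ne' measure_ball_lt_top.ne
  -- volume formula
  have hvol : ∀ (c : EuclideanSpace ℂ (Fin n)) (t : ℝ), 0 ≤ t →
      (volume (ball c t)).toReal
        = t ^ N * (volume (ball (0 : EuclideanSpace ℂ (Fin n)) 1)).toReal := by
    intro c t ht
    rw [Measure.addHaar_ball volume c ht, ENNReal.toReal_mul,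
      ENNReal.toReal_ofReal (by positivity)]
  -- averages of functions bounded above by 1 are at most 1
  have havg : ∀ (v : EuclideanSpace ℂ (Fin n) → ℝ), Continuous v → (∀ w, v w ≤ 1) →
      ∀ (c : EuclideanSpace ℂ (Fin n)) (r : ℝ), 0 < r → ⨍ w in ball c r, v w ≤ 1 := by
    intro v hv hv1 c r hr
    have hc := hμpos c r hr
    rw [setAverage_eq, measureReal_def, smul_eq_mul, inv_mul_le_iff₀ hc, mul_one]
    have h1 : ∫ w in ball c r, v w ≤ ∫ _w in ball c r, (1 : ℝ) :=
      setIntegral_mono_on (hint v hv c r)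
        (integrableOn_const measure_ball_lt_top.ne) measurableSet_ball
        (fun x _ => hv1 x)
    rwa [setIntegral_const, measureReal_def, smul_eq_mul, mul_one] at h1
  intro z
  -- main limit for u
  have hmain : Tendsto (fun r : ℝ => ⨍ w in ball z r, u w) atTop (nhds 1) := by
    rw [tendsto_order]
    constructor
    · intro b hb
      obtain ⟨y, ⟨z₀, rfl⟩, hby, -⟩ := hsup.exists_between (show (b + 1) / 2 < 1 by linarith)
      have hbz₀ : b < u z₀ := by linarith
      set d := dist z z₀ with hd
      have hd0 : 0 ≤ d := dist_nonneg
      -- lower bound by volume-ratio times u z₀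
      have hlow : ∀ r : ℝ, d < r →
          ((r - d) / r) ^ N * u z₀ ≤ ⨍ w in ball z r, u w := by
        intro r hr
        have hs : 0 < r - d := by linarith
        have hr0 : 0 < r := lt_of_le_of_lt hd0 hr
        have hsub : ball z₀ (r - d) ⊆ ball z r :=
          ball_subset_ball' (by rw [dist_comm]; linarith)
        have hcs := hμpos z₀ (r - d) hs
        have hcr := hμpos z r hr0
        -- integral over small ball is at least its volume times u z₀
        have hI2 : (volume (ball z₀ (r - d))).toReal * u z₀
            ≤ ∫ w in ball z₀ (r - d), u w := by
          have h := hsh z₀ (r - d) hs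
          rw [setAverage_eq, measureReal_def, smul_eq_mul] at h
          have := mul_le_mul_of_nonneg_left h hcs.le
          rwa [← mul_assoc, mul_inv_cancel₀ hcs.ne', one_mul] at this
        have hI1 : ∫ w in ball z₀ (r - d), u w ≤ ∫ w in ball z r, u w :=
          setIntegral_mono_set (hint u hcont z r)
            (Filter.Eventually.of_forall fun x => (h01 x).1)
            (HasSubset.Subset.eventuallyLE hsub)
        rw [setAverage_eq, smul_eq_mul]
        have hratio : ((r - d) / r) ^ N
            = (volume (ball z r)).toReal⁻¹ * (volume (ball z₀ (r - d))).toReal := by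
          rw [hvol z r hr0.le, hvol z₀ (r - d) hs.le, div_pow]
          have hc0 : 0 < (volume (ball (0 : EuclideanSpace ℂ (Fin n)) 1)).toReal :=
            hμpos 0 1 one_pos
          field_simp
        rw [hratio, mul_assoc]
        have : (volume (ball z₀ (r - d))).toReal * u z₀ ≤ ∫ w in ball z r, u w :=
          le_trans hI2 hI1
        exact mul_le_mul_of_nonneg_left this (inv_nonneg.2 hcr.le) |>.trans_eq rfl
      -- the volume-ratio lower bound tends to u z₀ > b
      have hg : Tendsto (fun r : ℝ => ((r - d) / r) ^ N * u z₀) atTop (nhds (u z₀)) := by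
        have h1 : Tendsto (fun r : ℝ => (r - d) / r) atTop (nhds 1) := by
          have h2 : Tendsto (fun r : ℝ => 1 - d / r) atTop (nhds 1) := by
            have := Tendsto.div_atTop (tendsto_const_nhds (α := ℝ) (x := d)) tendsto_id
            simpa using (tendsto_const_nhds (α := ℝ) (x := (1:ℝ))).sub this
          refine h2.congr' ?_
          filter_upwards [eventually_gt_atTop (0 : ℝ)] with r hr
          field_simp
        have := (h1.pow N).mul_const (u z₀)
        simpa using this
      filter_upwards [hg.eventually_const_lt hbz₀, eventually_gt_atTop d] with r h1 h2
      exact lt_of_lt_of_le h1 (hlow r h2)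
    · intro b hb
      filter_upwards [eventually_gt_atTop (0 : ℝ)] with r hr
      exact lt_of_le_of_lt (havg u hcont (fun w => (h01 w).2) z r hr) hb
  refine ⟨hmain, ?_⟩
  -- squeeze for u²
  have hup : ∀ᶠ r : ℝ in atTop, ⨍ w in ball z r, (u w) ^ 2 ≤ 1 := by
    filter_upwards [eventually_gt_atTop (0 : ℝ)] with r hr
    exact havg (fun w => (u w) ^ 2) (hcont.pow 2)
      (fun w => pow_le_one₀ (h01 w).1 (h01 w).2) z r hr
  have hdown : ∀ᶠ r : ℝ in atTop,
      2 * (⨍ w in ball z r, u w) - 1 ≤ ⨍ w in ball z r, (u w) ^ 2 := by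
    filter_upwards [eventually_gt_atTop (0 : ℝ)] with r hr
    have hc := hμpos z r hr
    have hIu := hint u hcont z r
    have hI2 := hint (fun w => (u w) ^ 2) (hcont.pow 2) z r
    have hconst : IntegrableOn (fun _ => (1 : ℝ)) (ball z r) volume :=
      integrableOn_const measure_ball_lt_top.ne
    have hmono : ∫ w in ball z r, (2 * u w - 1) ≤ ∫ w in ball z r, (u w) ^ 2 :=
      setIntegral_mono_on ((hIu.const_mul 2).sub hconst) hI2 measurableSet_ball
        (fun x _ => by nlinarith [(h01 x).1, (h01 x).2])
    have heq : ∫ w in ball z r, (2 * u w - 1)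
        = 2 * (∫ w in ball z r, u w) - (volume (ball z r)).toReal := by
      rw [integral_sub (hIu.const_mul 2) hconst, integral_const_mul, setIntegral_const,
        measureReal_def, smul_eq_mul, mul_one]
    rw [heq] at hmono
    rw [setAverage_eq, setAverage_eq, measureReal_def, smul_eq_mul, smul_eq_mul]
    have hkey := mul_le_mul_of_nonneg_left hmono (inv_nonneg.2 hc.le)
    have hcc : (volume (ball z r)).toReal⁻¹ * (volume (ball z r)).toReal = 1 :=
      inv_mul_cancel₀ hc.ne'
    nlinarith [hkey, hcc]
  have hlowt : Tendsto (fun r : ℝ => 2 * (⨍ w in ball z r, u w) - 1) atTop (nhds 1) := by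
    have h := (hmain.const_mul 2).sub (tendsto_const_nhds (x := (1 : ℝ)))
    norm_num at h
    exact h
  exact tendsto_of_tendsto_of_tendsto_of_le_of_le' hlowt tendsto_const_nhds hdown hup
end
end

section
/- Let A be an n×n complex Hermitian matrix whose eigenvalue vector λ(A) lies in Γ̄_m (1 ≤ m ≤ n), and let P be an n×n complex positive semidefinite Hermitian matrix. Then the eigenvalue vector λ(A + P) of A + P lies in Γ̄_m. -/
open scoped ComplexOrder

noncomputable section

/-- `σ_k(λ)`, the `k`-th elementary symmetric polynomial of `λ ∈ ℝⁿ`. -/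
def esymm (n k : ℕ) (lam : Fin n → ℝ) : ℝ :=
  ∑ s ∈ Finset.univ.powersetCard k, ∏ i ∈ s, lam i

/-- The Gårding cone `Γ_m = {λ ∈ ℝⁿ : σ_1(λ) > 0, …, σ_m(λ) > 0}`. -/
def gardingCone (n m : ℕ) : Set (Fin n → ℝ) :=
  {lam | ∀ k, 1 ≤ k → k ≤ m → 0 < esymm n k lam}

namespace GPF

/-- generic esymm over a Finset of indices -/
def esymmF {ι A : Type*} [CommRing A] (u : Finset ι) (k : ℕ) (g : ι → A) : A :=
  ∑ s ∈ u.powersetCard k, ∏ i ∈ s, g i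

lemma esymm_eq_esymmF (n k : ℕ) (lam : Fin n → ℝ) :
    esymm n k lam = esymmF Finset.univ k lam := rfl

lemma esymmF_eq_multiset {ι A : Type*} [CommRing A] (u : Finset ι) (k : ℕ) (g : ι → A) :
    esymmF u k g = (u.val.map g).esymm k := (Finset.esymm_map_val g u k).symm

lemma esymmF_zero {ι A : Type*} [CommRing A] (u : Finset ι) (g : ι → A) :
    esymmF u 0 g = 1 := by
  simp [esymmF, Finset.powersetCard_zero]

lemma multiset_esymm_zero {A : Type*} [CommRing A] (s : Multiset A) : s.esymm 0 = 1 := by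
  simp [Multiset.esymm, Multiset.powersetCard_zero_left]

lemma multiset_esymm_of_card_lt {A : Type*} [CommRing A] {s : Multiset A} {k : ℕ}
    (h : Multiset.card s < k) : s.esymm k = 0 := by
  have : s.powersetCard k = 0 := by
    have h2 : k = Multiset.card s + (k - Multiset.card s) := by omega
    rw [h2]
    exact s.powersetCard_card_add (by omega)
  simp [Multiset.esymm, this]

lemma multiset_esymm_cons {A : Type*} [CommRing A] (a : A) (s : Multiset A) {k : ℕ}
    (hk : 1 ≤ k) : (a ::ₘ s).esymm k = s.esymm k + a * s.esymm (k - 1) := by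
  obtain ⟨k, rfl⟩ : ∃ j, k = j + 1 := ⟨k - 1, by omega⟩
  have h1 : (Multiset.map Multiset.prod ((Multiset.powersetCard k s).map (Multiset.cons a))).sum
      = a * s.esymm k := by
    rw [Multiset.map_map, Multiset.esymm, ← Multiset.sum_map_mul_left]
    exact congrArg Multiset.sum (Multiset.map_congr rfl (fun t _ => by
      simp [Function.comp, Multiset.prod_cons]))
  rw [Multiset.esymm, Multiset.powersetCard_cons, Multiset.map_add, Multiset.sum_add, h1]
  simp only [Nat.add_sub_cancel]
  rfl

lemma multiset_esymm_map_hom {A B : Type*} [CommRing A] [CommRing B] (f : A →+* B)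
    (s : Multiset A) (k : ℕ) : (s.map f).esymm k = f (s.esymm k) := by
  rw [Multiset.esymm, Multiset.esymm, Multiset.powersetCard_map, Multiset.map_map,
    map_multiset_sum, Multiset.map_map]
  exact congrArg Multiset.sum (Multiset.map_congr rfl (fun t _ => (map_multiset_prod f t).symm))

/-- enumeration of a multiset by `Fin (card s)` -/
lemma multiset_exists_fin {α : Type*} (s : Multiset α) :
    ∃ f : Fin (Multiset.card s) → α, s = Finset.univ.val.map f := by
  refine Quotient.inductionOn s fun l => ?_
  refine ⟨fun i => l.get i, ?_⟩
  have huniv : (Finset.univ.val : Multiset (Fin l.length)) = ↑(List.finRange l.length) := rfl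
  change (l : Multiset α) = Multiset.map (fun i : Fin l.length => l.get i)
    ((List.finRange l.length : List (Fin l.length)) : Multiset (Fin l.length))
  rw [Multiset.map_coe]
  exact congrArg _ (List.map_get_finRange l).symm

end GPF
section Stage2
namespace GPF
open Finset

set_option linter.unusedSectionVars false
variable {ι : Type*} [DecidableEq ι]

/-- reindexing pairs (S, i∈S) ↔ (T, i∉T) with T = S.erase i -/
lemma sum_sum_erase {M : Type*} [AddCommMonoid M] (u : Finset ι) (k : ℕ)
    (F : Finset ι → ι → M) :
    ∑ S ∈ u.powersetCard (k+1), ∑ i ∈ S, F (S.erase i) i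
      = ∑ T ∈ u.powersetCard k, ∑ i ∈ u \ T, F T i := by
  rw [Finset.sum_sigma', Finset.sum_sigma']
  refine Finset.sum_bij' (fun p _ => ⟨p.1.erase p.2, p.2⟩) (fun p _ => ⟨insert p.2 p.1, p.2⟩)
    ?_ ?_ ?_ ?_ ?_
  · rintro ⟨S, i⟩ hp
    simp only [Finset.mem_sigma, Finset.mem_powersetCard] at hp ⊢
    obtain ⟨⟨hSu, hScard⟩, hiS⟩ := hp
    refine ⟨⟨(Finset.erase_subset _ _).trans hSu, ?_⟩, ?_⟩
    · rw [Finset.card_erase_of_mem hiS, hScard]; omega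
    · exact Finset.mem_sdiff.2 ⟨hSu hiS, Finset.notMem_erase _ _⟩
  · rintro ⟨T, i⟩ hp
    simp only [Finset.mem_sigma, Finset.mem_powersetCard, Finset.mem_sdiff] at hp ⊢
    obtain ⟨⟨hTu, hTcard⟩, hiu, hiT⟩ := hp
    refine ⟨⟨?_, ?_⟩, Finset.mem_insert_self _ _⟩
    · exact Finset.insert_subset hiu hTu
    · rw [Finset.card_insert_of_notMem hiT, hTcard]
  · rintro ⟨S, i⟩ hp
    simp only [Finset.mem_sigma, Finset.mem_powersetCard] at hp
    have : insert i (S.erase i) = S := Finset.insert_erase hp.2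
    simp [this]
  · rintro ⟨T, i⟩ hp
    simp only [Finset.mem_sigma, Finset.mem_powersetCard, Finset.mem_sdiff] at hp
    have : (insert i T).erase i = T := Finset.erase_insert hp.2.2
    simp [this]
  · rintro ⟨S, i⟩ _
    rfl

lemma hasDerivAt_esymmF (u : Finset ι) (k : ℕ) (g : ι → ℝ) (t : ℝ) :
    HasDerivAt (fun t => esymmF u (k+1) (fun i => g i + t))
      ((u.card - k : ℕ) * esymmF u k (fun i => g i + t)) t := by
  have h : ∀ S ∈ u.powersetCard (k+1), HasDerivAt
      (fun t => ∏ i ∈ S, (g i + t)) (∑ i ∈ S, ∏ j ∈ S.erase i, (g j + t)) t := by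
    intro S _
    have := HasDerivAt.fun_finsetProd (u := S) (f := fun i t => g i + t)
      (f' := fun _ => (1:ℝ)) (x := t) (fun i _ => by
        simpa using (hasDerivAt_id t).const_add (g i))
    simpa using this
  have H := HasDerivAt.fun_sum h
  have hre : ∑ S ∈ u.powersetCard (k+1), ∑ i ∈ S, ∏ j ∈ S.erase i, (g j + t)
      = (u.card - k : ℕ) * esymmF u k (fun i => g i + t) := by
    rw [sum_sum_erase u k (fun T _ => ∏ j ∈ T, (g j + t))]
    rw [esymmF, Finset.mul_sum]
    refine Finset.sum_congr rfl fun T hT => ?_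
    rw [Finset.sum_const, nsmul_eq_mul]
    congr 2
    rw [Finset.card_sdiff_of_subset (Finset.mem_powersetCard.1 hT).1,
      (Finset.mem_powersetCard.1 hT).2]
  rw [← hre]
  exact H

lemma continuous_esymmF_shift (u : Finset ι) (k : ℕ) (g : ι → ℝ) :
    Continuous (fun t => esymmF u k (fun i => g i + t)) := by
  unfold esymmF
  exact continuous_finset_sum _ fun S _ => continuous_finset_prod _ fun i _ =>
    (continuous_const.add continuous_id)

/-- positivity of shifted esymm under nonneg esymm hypotheses -/
lemma esymmF_shift_pos (u : Finset ι) (m' : ℕ) (hm' : m' ≤ u.card) (g : ι → ℝ)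
    (h : ∀ j, 1 ≤ j → j ≤ m' → 0 ≤ esymmF u j g) :
    ∀ j ≤ m', ∀ t > (0:ℝ), 0 < esymmF u j (fun i => g i + t) := by
  intro j
  induction j with
  | zero => intro _ t _; rw [esymmF_zero]; norm_num
  | succ k ih =>
    intro hk t ht
    have hmono : StrictMonoOn (fun t => esymmF u (k+1) (fun i => g i + t)) (Set.Ici 0) := by
      refine strictMonoOn_of_hasDerivWithinAt_pos
        (f' := fun x => ((u.card - k : ℕ) : ℝ) * esymmF u k (fun i => g i + x)) (convex_Ici 0)
        ((continuous_esymmF_shift u (k+1) g).continuousOn) ?_ ?_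
      · intro x _
        exact (hasDerivAt_esymmF u k g x).hasDerivWithinAt
      · intro x hx
        rw [interior_Ici] at hx
        have h1 : 0 < esymmF u k (fun i => g i + x) := ih (by omega) x hx
        have h2 : 0 < (u.card - k : ℕ) := by omega
        positivity
    have h0 : 0 ≤ esymmF u (k+1) (fun i => g i + 0) := by
      simpa using h (k+1) (by omega) hk
    have := hmono (Set.self_mem_Ici) (Set.mem_Ici.2 ht.le) ht
    calc (0:ℝ) ≤ esymmF u (k+1) (fun i => g i + 0) := h0
      _ < _ := this

end GPF
end Stage2
section Stage3
namespace GPF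
open Finset

lemma continuous_esymm (n k : ℕ) : Continuous (fun lam : Fin n → ℝ => esymm n k lam) := by
  unfold esymm
  exact continuous_finset_sum _ fun S _ => continuous_finset_prod _ fun i _ => continuous_apply i

lemma esymm_nonneg_of_mem_closure {n m : ℕ} {lam : Fin n → ℝ}
    (h : lam ∈ closure (gardingCone n m)) :
    ∀ j, 1 ≤ j → j ≤ m → 0 ≤ esymm n j lam := by
  intro j hj1 hj2
  have hsub : gardingCone n m ⊆ (fun lam => esymm n j lam) ⁻¹' (Set.Ici 0) :=
    fun x hx => Set.mem_preimage.2 (Set.mem_Ici.2 (hx j hj1 hj2).le)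
  have hcl : IsClosed ((fun lam => esymm n j lam) ⁻¹' (Set.Ici 0)) :=
    (isClosed_Ici).preimage (continuous_esymm n j)
  exact (closure_minimal hsub hcl h : _)

lemma shift_mem_gardingCone {n m : ℕ} (hmn : m ≤ n) {lam : Fin n → ℝ}
    (h : ∀ j, 1 ≤ j → j ≤ m → 0 ≤ esymm n j lam) {t : ℝ} (ht : 0 < t) :
    (fun i => lam i + t) ∈ gardingCone n m := by
  intro k hk1 hk2
  have := esymmF_shift_pos (Finset.univ : Finset (Fin n)) m (by simpa using hmn) lam
    (fun j h1 h2 => h j h1 h2) k hk2 t ht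
  exact this

lemma mem_closure_gardingCone_of_esymm_nonneg {n m : ℕ} (hmn : m ≤ n) {lam : Fin n → ℝ}
    (h : ∀ j, 1 ≤ j → j ≤ m → 0 ≤ esymm n j lam) :
    lam ∈ closure (gardingCone n m) := by
  have htend : Filter.Tendsto (fun j : ℕ => fun i => lam i + 1/(j+1 : ℝ)) Filter.atTop (nhds lam) := by
    rw [tendsto_pi_nhds]
    intro i
    have : Filter.Tendsto (fun j : ℕ => 1/(j+1 : ℝ)) Filter.atTop (nhds 0) :=
      tendsto_one_div_add_atTop_nhds_zero_nat
    simpa using (tendsto_const_nhds (x := lam i)).add this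
  refine mem_closure_of_tendsto htend (Filter.Eventually.of_forall fun j => ?_)
  exact shift_mem_gardingCone hmn h (by positivity)

end GPF
end Stage3
section Stage4a
namespace GPF
open Finset

set_option linter.unusedSectionVars false
variable {ι : Type*} [DecidableEq ι]

lemma esymmF_one {A : Type*} [CommRing A] (u : Finset ι) (g : ι → A) :
    esymmF u 1 g = ∑ i ∈ u, g i := by
  unfold esymmF
  rw [Finset.powersetCard_one, Finset.sum_map]
  simp

lemma esymmF_insert {A : Type*} [CommRing A] {a : ι} {u : Finset ι} (ha : a ∉ u)
    (k : ℕ) (g : ι → A) :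
    esymmF (insert a u) (k+1) g = esymmF u (k+1) g + g a * esymmF u k g := by
  unfold esymmF
  rw [Finset.powersetCard_succ_insert ha, Finset.sum_union, Finset.sum_image, Finset.mul_sum]
  · congr 1
    refine Finset.sum_congr rfl fun t ht => ?_
    have hat : a ∉ t := fun hat => ha ((Finset.mem_powersetCard.1 ht).1 hat)
    rw [Finset.prod_insert hat]
  · intro t ht s hs hts
    have hat : a ∉ t := fun h => ha ((Finset.mem_powersetCard.1 ht).1 h)
    have has : a ∉ s := fun h => ha ((Finset.mem_powersetCard.1 hs).1 h)
    rw [← Finset.erase_insert hat, ← Finset.erase_insert has, hts]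
  · rw [Finset.disjoint_right]
    rintro S hS hS'
    obtain ⟨t, ht, rfl⟩ := Finset.mem_image.1 hS
    exact (fun h => ha ((Finset.mem_powersetCard.1 hS').1 h)) (Finset.mem_insert_self a t)

lemma esymmF_two {A : Type*} [CommRing A] (u : Finset ι) (g : ι → A) :
    2 * esymmF u 2 g = (∑ i ∈ u, g i)^2 - ∑ i ∈ u, (g i)^2 := by
  induction u using Finset.induction_on with
  | empty =>
    rw [esymmF_eq_multiset, multiset_esymm_of_card_lt (by simp)]
    simp
  | @insert a u ha ih =>
    have hins := esymmF_insert ha 1 g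
    norm_num at hins
    rw [hins, esymmF_one, Finset.sum_insert ha, Finset.sum_insert ha]
    linear_combination ih

lemma esymmF_top {A : Type*} [CommRing A] (u : Finset ι) (g : ι → A) :
    esymmF u u.card g = ∏ i ∈ u, g i := by
  unfold esymmF
  rw [Finset.powersetCard_self, Finset.sum_singleton]

lemma sum_prod_erase_eq {A : Type*} [CommRing A] (u : Finset ι) (k : ℕ)
    (hk : u.card = k + 1) (g : ι → A) :
    ∑ i ∈ u, ∏ j ∈ u.erase i, g j = esymmF u k g := by
  have h := sum_sum_erase u k (fun T _ => ∏ j ∈ T, g j)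
  rw [← hk, Finset.powersetCard_self, Finset.sum_singleton] at h
  rw [h, esymmF]
  refine Finset.sum_congr rfl fun T hT => ?_
  rw [Finset.sum_const, Finset.card_sdiff_of_subset (Finset.mem_powersetCard.1 hT).1,
    (Finset.mem_powersetCard.1 hT).2, hk]
  simp

lemma sum_powersetCard_compl {M : Type*} [AddCommMonoid M] {N : ℕ} (j : ℕ) (hj : j ≤ N)
    (G : Finset (Fin N) → M) :
    ∑ T ∈ (Finset.univ : Finset (Fin N)).powersetCard j, G T
      = ∑ S ∈ (Finset.univ : Finset (Fin N)).powersetCard (N - j), G (Finset.univ \ S) := by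
  refine Finset.sum_nbij' (fun T => Finset.univ \ T) (fun S => Finset.univ \ S) ?_ ?_ ?_ ?_ ?_
  · intro T hT
    rw [Finset.mem_powersetCard] at hT ⊢
    refine ⟨Finset.subset_univ _, ?_⟩
    rw [Finset.card_sdiff_of_subset (Finset.subset_univ _), hT.2, Finset.card_univ, Fintype.card_fin]
  · intro S hS
    rw [Finset.mem_powersetCard] at hS ⊢
    refine ⟨Finset.subset_univ _, ?_⟩
    rw [Finset.card_sdiff_of_subset (Finset.subset_univ _), hS.2, Finset.card_univ, Fintype.card_fin]
    omega
  · intro T hT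
    simp [Finset.sdiff_sdiff_self_left, Finset.inter_eq_right.2 (Finset.subset_univ _)]
  · intro S hS
    simp [Finset.sdiff_sdiff_self_left, Finset.inter_eq_right.2 (Finset.subset_univ _)]
  · intro T hT
    have hTT : Finset.univ \ (Finset.univ \ T) = T := by
      simp [Finset.sdiff_sdiff_self_left, Finset.inter_eq_right.2 (Finset.subset_univ _)]
    exact (congrArg G hTT).symm

end GPF
end Stage4a
section Stage4b
namespace GPF
open Finset Polynomial

/-- normalized elementary symmetric mean -/
def pnorm (s : Multiset ℝ) (j : ℕ) : ℝ := s.esymm j / ((Multiset.card s).choose j)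

lemma choose_sub_mul {N j : ℕ} (hN : 1 ≤ N) (hj : j ≤ N - 1) :
    (N - j) * N.choose j = N * (N-1).choose j := by
  obtain ⟨M, rfl⟩ : ∃ M, N = M + 1 := ⟨N - 1, by omega⟩
  simp only [Nat.add_sub_cancel]
  calc (M + 1 - j) * (M+1).choose j = (M+1).choose j * (M+1-j) := Nat.mul_comm _ _
    _ = (M+1).choose (j+1) * (j+1) := (Nat.choose_succ_right_eq (M+1) j).symm
    _ = (M+1) * M.choose j := (Nat.add_one_mul_choose_eq M j).symm

/-- Newton's inequality, top case, Fin version -/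
lemma newton_top_fin (N : ℕ) (hN : 2 ≤ N) (f : Fin N → ℝ) :
    (N:ℝ)^2 * (esymmF Finset.univ N f * esymmF Finset.univ (N-2) f)
      ≤ (N.choose 2 : ℝ) * (esymmF Finset.univ (N-1) f)^2 := by
  classical
  set w : Fin N → ℝ := fun i => ∏ j ∈ Finset.univ.erase i, f j with hw
  have hcard : (Finset.univ : Finset (Fin N)).card = N := by simp
  have h1 : esymmF Finset.univ (N-1) f = ∑ i, w i := by
    rw [← sum_prod_erase_eq Finset.univ (N-1) (by omega) f]
  have htop' : esymmF Finset.univ N f = ∏ j, f j := by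
    have h := esymmF_top (Finset.univ : Finset (Fin N)) f
    rw [hcard] at h
    exact h
  have h2 : esymmF Finset.univ N f * esymmF Finset.univ (N-2) f
      = esymmF Finset.univ 2 w := by
    have hcompl := sum_powersetCard_compl (N := N) (N-2) (by omega)
      (fun T => ∏ j ∈ T, f j)
    rw [show N - (N-2) = 2 by omega] at hcompl
    rw [htop', esymmF, hcompl, Finset.mul_sum, esymmF]
    refine Finset.sum_congr rfl fun S hS => ?_
    rw [Finset.mem_powersetCard] at hS
    obtain ⟨x, y, hxy, rfl⟩ := Finset.card_eq_two.1 hS.2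
    have hyx : y ∈ Finset.univ.erase x := by simp [hxy.symm]
    have hxy' : x ∈ Finset.univ.erase y := by simp [hxy]
    have hwx : w x = f y * ∏ j ∈ (Finset.univ.erase x).erase y, f j :=
      (Finset.mul_prod_erase _ f hyx).symm
    have hwy : w y = f x * ∏ j ∈ (Finset.univ.erase x).erase y, f j := by
      rw [hw]
      simp only
      rw [← Finset.mul_prod_erase _ f hxy', Finset.erase_right_comm]
    have hprodu : ∏ j, f j = f x * w x := (Finset.mul_prod_erase _ f (Finset.mem_univ x)).symm
    have hsd : Finset.univ \ {x, y} = (Finset.univ.erase x).erase y := by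
      ext z
      simp only [Finset.mem_sdiff, Finset.mem_erase, Finset.mem_insert, Finset.mem_univ,
        Finset.mem_singleton, true_and]
      tauto
    rw [Finset.prod_pair hxy, hsd, hprodu, hwx, hwy]
    ring
  have h3 := esymmF_two (Finset.univ : Finset (Fin N)) w
  have hCS : (∑ i, w i)^2 ≤ (N:ℝ) * ∑ i, (w i)^2 := by
    have := sq_sum_le_card_mul_sum_sq (s := (Finset.univ : Finset (Fin N))) (f := w)
    rwa [hcard] at this
  rw [h2, h1, Nat.cast_choose_two]
  have hN' : (2:ℝ) ≤ (N:ℝ) := by exact_mod_cast hN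
  nlinarith [hCS, sq_nonneg (∑ i, w i)]

/-- Newton's inequality, top case, multiset version -/
lemma newton_top (s : Multiset ℝ) (k : ℕ) (hk : 1 ≤ k) (hcard : Multiset.card s = k + 1) :
    pnorm s (k+1) * pnorm s (k-1) ≤ pnorm s k ^ 2 := by
  obtain ⟨f, hf⟩ := multiset_exists_fin s
  have he : ∀ j, s.esymm j = esymmF Finset.univ j f := fun j => by
    rw [esymmF_eq_multiset, ← hf]
  have hN2 : 2 ≤ Multiset.card s := by omega
  have htop := newton_top_fin (Multiset.card s) hN2 f
  have hsymm2 : (Multiset.card s).choose (Multiset.card s - 2) = (Multiset.card s).choose 2 :=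
    Nat.choose_symm hN2
  have hsymm1 : ((Multiset.card s).choose (Multiset.card s - 1) : ℝ) = (Multiset.card s : ℝ) := by
    rw [Nat.choose_symm (by omega), Nat.choose_one_right]
  have e1 : k + 1 = Multiset.card s := hcard.symm
  have e2 : k - 1 = Multiset.card s - 2 := by omega
  have e3 : k = Multiset.card s - 1 := by omega
  unfold pnorm
  rw [e1, e2, e3, Nat.choose_self, hsymm2, hsymm1]
  simp only [he]
  rw [Nat.cast_one, div_one, div_pow, ← mul_div_assoc, div_le_div_iff₀]
  · linear_combination htop
  · exact_mod_cast Nat.cast_pos.2 (Nat.choose_pos (by omega))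
  · positivity

/-- the multiset of (negated) roots of the derivative: one differentiation step -/
lemma newton_step (s : Multiset ℝ) (h2 : 2 ≤ Multiset.card s) :
    ∃ s' : Multiset ℝ, Multiset.card s' = Multiset.card s - 1 ∧
      ∀ j ≤ Multiset.card s - 1,
        (Multiset.card s : ℝ) * s'.esymm j
          = ((Multiset.card s - j : ℕ) : ℝ) * s.esymm j := by
  classical
  set N := Multiset.card s with hN
  set P : Polynomial ℝ := (s.map fun r => X + C r).prod with hP
  have hmonic : P.Monic :=
    monic_multiset_prod_of_monic s (fun r => X + C r) (fun r _ => monic_X_add_C r)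
  have hdeg : P.natDegree = N := by
    rw [hP, natDegree_multiset_prod_of_monic (s.map fun r => X + C r) (fun p hp => by
      obtain ⟨r, _, rfl⟩ := Multiset.mem_map.1 hp
      exact monic_X_add_C r)]
    rw [Multiset.map_map]
    simp [Function.comp_def, natDegree_X_add_C]
    exact hN.symm
  have hXC : ∀ r : ℝ, (X + C r).roots = {-r} := fun r => by
    have h : X + C r = X - C (-r) := by rw [map_neg, sub_neg_eq_add]
    rw [h, roots_X_sub_C]
  have hroots : P.roots = s.map (fun r => -r) := by
    rw [hP, Polynomial.roots_multiset_prod, Multiset.bind_map]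
    · simp only [hXC]
      exact Multiset.bind_singleton _ _
    · intro h0
      obtain ⟨r, _, hr⟩ := Multiset.mem_map.1 h0
      exact X_add_C_ne_zero r hr
  have hrootscard : Multiset.card P.roots = N := by rw [hroots, Multiset.card_map]
  have hd1 : Multiset.card (derivative P).roots ≤ N - 1 :=
    le_trans (Polynomial.card_roots' _) (le_trans (natDegree_derivative_le P) (by omega))
  have hd2 : N ≤ Multiset.card (derivative P).roots + 1 := by
    have := Polynomial.card_roots_le_derivative P
    omega
  have hdcard : Multiset.card (derivative P).roots = N - 1 := by omega
  have hddeg : (derivative P).natDegree = N - 1 := by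
    have h3 := Polynomial.card_roots' (derivative P)
    have h4 : (derivative P).natDegree ≤ N - 1 := le_trans (natDegree_derivative_le P) (by omega)
    omega
  have hlead : (derivative P).leadingCoeff = (N : ℝ) := by
    rw [Polynomial.leadingCoeff, hddeg, Polynomial.coeff_derivative]
    rw [show N - 1 + 1 = N by omega, ← hdeg, hmonic.coeff_natDegree]
    rw [hdeg, one_mul, Nat.cast_sub (by omega : 1 ≤ N)]
    push_cast
    ring
  refine ⟨(derivative P).roots.map Neg.neg, by rw [Multiset.card_map, hdcard], ?_⟩
  intro j hj
  have hco := Polynomial.coeff_eq_esymm_roots_of_card (p := derivative P)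
    (by rw [hdcard, hddeg]) (k := N - 1 - j) (by omega)
  rw [hddeg, hlead, show N - 1 - (N - 1 - j) = j by omega] at hco
  have hcoP : P.coeff (N - j) = s.esymm j := by
    have h := Multiset.prod_X_add_C_coeff s (k := N - j) (by omega)
    rw [← hP, ← hN, show N - (N - j) = j by omega] at h
    exact h
  have hder : (derivative P).coeff (N - 1 - j)
      = P.coeff (N - j) * ((N - j : ℕ) : ℝ) := by
    have h := Polynomial.coeff_derivative P (N - 1 - j)
    rw [show N - 1 - j + 1 = N - j by omega] at h
    rw [h]
    congr 1
    have h2 : N - 1 - j + 1 = N - j := by omega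
    exact_mod_cast h2
  rw [hcoP] at hder
  rw [hder] at hco
  rw [Multiset.esymm_neg]
  linear_combination (-1 : ℝ) * hco

lemma newton (s : Multiset ℝ) (k : ℕ) (hk1 : 1 ≤ k) (hk2 : k + 1 ≤ Multiset.card s) :
    pnorm s (k+1) * pnorm s (k-1) ≤ pnorm s k ^ 2 := by
  suffices H : ∀ (N : ℕ) (s : Multiset ℝ), Multiset.card s = N → ∀ k, 1 ≤ k →
      k + 1 ≤ Multiset.card s → pnorm s (k+1) * pnorm s (k-1) ≤ pnorm s k ^ 2 by
    exact H _ s rfl k hk1 hk2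
  clear hk1 hk2 s k
  intro N
  induction N using Nat.strong_induction_on with
  | _ N ih =>
    intro s hcard k hk1 hk2
    rcases eq_or_lt_of_le hk2 with heq | hlt
    · exact newton_top s k hk1 heq.symm
    · obtain ⟨s', hcard', hstep⟩ := newton_step s (by omega)
      have hNpos : (0:ℝ) < (Multiset.card s : ℝ) := by
        exact_mod_cast Nat.pos_of_ne_zero (by omega)
      have hpn : ∀ j ≤ Multiset.card s - 1, pnorm s' j = pnorm s j := by
        intro j hj
        unfold pnorm
        rw [hcard']
        have hchoose := choose_sub_mul (N := Multiset.card s) (j := j) (by omega) hj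
        have hstepj := hstep j hj
        have hc1 : (0:ℝ) < (((Multiset.card s - 1).choose j : ℕ) : ℝ) := by
          exact_mod_cast Nat.choose_pos (by omega)
        have hc2 : (0:ℝ) < (((Multiset.card s).choose j : ℕ) : ℝ) := by
          exact_mod_cast Nat.choose_pos (by omega)
        rw [div_eq_div_iff (ne_of_gt hc1) (ne_of_gt hc2)]
        have hcast : ((Multiset.card s - j : ℕ) : ℝ) * (((Multiset.card s).choose j : ℕ) : ℝ)
            = (Multiset.card s : ℝ) * (((Multiset.card s - 1).choose j : ℕ) : ℝ) := by
          exact_mod_cast congrArg (Nat.cast : ℕ → ℝ) hchoose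
        refine mul_left_cancel₀ (ne_of_gt hNpos) ?_
        calc (Multiset.card s : ℝ) * (s'.esymm j * (((Multiset.card s).choose j : ℕ) : ℝ))
            = ((Multiset.card s : ℝ) * s'.esymm j) * (((Multiset.card s).choose j : ℕ) : ℝ) := by
              ring
          _ = (((Multiset.card s - j : ℕ)) : ℝ) * s.esymm j
              * (((Multiset.card s).choose j : ℕ) : ℝ) := by rw [hstepj]
          _ = ((((Multiset.card s - j : ℕ)) : ℝ) * (((Multiset.card s).choose j : ℕ) : ℝ))
              * s.esymm j := by ring
          _ = ((Multiset.card s : ℝ) * (((Multiset.card s - 1).choose j : ℕ) : ℝ))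
              * s.esymm j := by rw [hcast]
          _ = _ := by ring
      rw [← hpn (k+1) (by omega), ← hpn k (by omega), ← hpn (k-1) (by omega)]
      exact ih (N-1) (by omega) s' (by omega) k hk1 (by omega)

lemma newton_degenerate (s : Multiset ℝ) (k : ℕ) (h2 : 2 ≤ k) (hk : k ≤ Multiset.card s)
    (h0 : s.esymm (k-1) = 0) : s.esymm k * s.esymm (k-2) ≤ 0 := by
  have hn := newton s (k-1) (by omega) (by omega)
  rw [show k - 1 + 1 = k by omega, show k - 1 - 1 = k - 2 by omega] at hn
  unfold pnorm at hn
  rw [h0, zero_div] at hn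
  norm_num at hn
  rw [div_mul_div_comm] at hn
  by_contra hpos
  push_neg at hpos
  have hc1 : (0:ℝ) < (((Multiset.card s).choose k : ℕ) : ℝ) := by
    exact_mod_cast Nat.choose_pos hk
  have hc2 : (0:ℝ) < (((Multiset.card s).choose (k-2) : ℕ) : ℝ) := by
    exact_mod_cast Nat.choose_pos (by omega)
  have : 0 < (s.esymm k * s.esymm (k-2))
      / ((((Multiset.card s).choose k : ℕ) : ℝ) * (((Multiset.card s).choose (k-2) : ℕ) : ℝ)) :=
    div_pos hpos (by positivity)
  linarith

end GPF
end Stage4b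
section Stage5
namespace GPF
open Finset

lemma esymmF_pos {ι : Type*} (u : Finset ι) (k : ℕ) (hk : k ≤ u.card) (g : ι → ℝ)
    (hg : ∀ i ∈ u, 0 < g i) : 0 < esymmF u k g := by
  unfold esymmF
  refine Finset.sum_pos (fun S hS => ?_) (Finset.powersetCard_nonempty.2 hk)
  exact Finset.prod_pos fun i hi => hg i ((Finset.mem_powersetCard.1 hS).1 hi)

/-- multiset version of positivity of shifted esymm -/
lemma multiset_shift_pos (s : Multiset ℝ) (m' : ℕ) (hm' : m' ≤ Multiset.card s)
    (hnn : ∀ j, 1 ≤ j → j ≤ m' → 0 ≤ s.esymm j) :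
    ∀ j ≤ m', ∀ t > (0:ℝ), 0 < (s.map (· + t)).esymm j := by
  obtain ⟨f, hf⟩ := multiset_exists_fin s
  intro j hj t ht
  have hmap : s.map (· + t) = Finset.univ.val.map (fun i => f i + t) := by
    have h1 : s.map (· + t) = (Finset.univ.val.map f).map (· + t) :=
      congrArg (Multiset.map (· + t)) hf
    rw [Multiset.map_map] at h1
    exact h1
  rw [hmap, ← esymmF_eq_multiset]
  refine esymmF_shift_pos Finset.univ m' (by simpa using hm') f
    (fun j h1 h2 => ?_) j hj t ht
  rw [esymmF_eq_multiset, ← hf]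
  exact hnn j h1 h2

/-- The key restriction lemma: if `σ_j(s) ≥ 0` for `1 ≤ j ≤ k`, then deleting any
element keeps `σ_{k-1} ≥ 0`. -/
lemma restriction (k : ℕ) : ∀ (s : Multiset ℝ), 1 ≤ k → k ≤ Multiset.card s →
    (∀ j, 1 ≤ j → j ≤ k → 0 ≤ s.esymm j) → ∀ r ∈ s, 0 ≤ (s.erase r).esymm (k-1) := by
  induction k using Nat.strong_induction_on with
  | _ k ih =>
    intro s hk1 hk2 hnn r hr
    rcases Nat.lt_or_ge k 2 with hk | hk
    · have : k = 1 := by omega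
      subst this
      rw [multiset_esymm_zero]
      norm_num
    -- now 2 ≤ k
    set μ := s.erase r with hμ
    have hcons : s = r ::ₘ μ := (Multiset.cons_erase hr).symm
    have hcardμ : Multiset.card μ = Multiset.card s - 1 := by
      rw [hμ, Multiset.card_erase_of_mem hr]
      rfl
    have hμnn : ∀ i, 1 ≤ i → i ≤ k - 2 → 0 ≤ μ.esymm i := by
      intro i h1 h2
      have := ih (i+1) (by omega) s (by omega) (by omega)
        (fun j hj1 hj2 => hnn j hj1 (by omega)) r hr
      simpa using this
    by_contra hneg
    push_neg at hneg
    -- g j t = (μ.map (·+t)).esymm j ; f j t = (s.map (·+t)).esymm j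
    have hfpos : ∀ j, 1 ≤ j → j ≤ k → ∀ t > (0:ℝ), 0 < (s.map (· + t)).esymm j :=
      fun j h1 h2 t ht => multiset_shift_pos s k hk2 hnn j h2 t ht
    have hgpos : ∀ j, 1 ≤ j → j ≤ k - 2 → ∀ t > (0:ℝ), 0 < (μ.map (· + t)).esymm j :=
      fun j h1 h2 t ht => multiset_shift_pos μ (k-2) (by omega) hμnn j h2 t ht
    -- continuity and IVT for t ↦ (μ.map (·+t)).esymm (k-1)
    obtain ⟨f, hf⟩ := multiset_exists_fin μ
    have hmapf : ∀ t : ℝ, μ.map (· + t) = Finset.univ.val.map (fun i => f i + t) := by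
      intro t
      have h1 : μ.map (· + t) = (Finset.univ.val.map f).map (· + t) :=
        congrArg (Multiset.map (· + t)) hf
      rw [Multiset.map_map] at h1
      exact h1
    have hGg : ∀ t : ℝ, (μ.map (· + t)).esymm (k-1) = esymmF Finset.univ (k-1) (fun i => f i + t) := by
      intro t
      rw [hmapf, ← esymmF_eq_multiset]
    have hcont : ContinuousOn (fun t => esymmF Finset.univ (k-1) (fun i => f i + t))
        (Set.Icc 0 (1 + ∑ i, |f i|)) := (continuous_esymmF_shift _ _ _).continuousOn
    set t0 : ℝ := 1 + ∑ i, |f i| with ht0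
    have ht0pos : 0 < t0 := by
      have : (0:ℝ) ≤ ∑ i, |f i| := Finset.sum_nonneg fun i _ => abs_nonneg _
      linarith
    have hg0 : esymmF Finset.univ (k-1) (fun i => f i + 0) < 0 := by
      have h1 : μ.map (· + (0:ℝ)) = μ := by
        calc μ.map (· + (0:ℝ)) = μ.map id := Multiset.map_congr rfl (fun x _ => add_zero x)
          _ = μ := Multiset.map_id μ
      have h2 := hGg 0
      rw [h1] at h2
      rw [← h2]
      exact hneg
    have hgt0 : 0 < esymmF Finset.univ (k-1) (fun i => f i + t0) := by
      refine esymmF_pos Finset.univ (k-1) ?_ _ (fun i _ => ?_)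
      · have : (Finset.univ : Finset (Fin (Multiset.card μ))).card = Multiset.card μ := by simp
        omega
      · have h1 : |f i| ≤ ∑ j, |f j| := Finset.single_le_sum (fun j _ => abs_nonneg (f j))
          (Finset.mem_univ i)
        have h2 : -(f i) ≤ |f i| := neg_le_abs _
        rw [ht0]
        linarith
    obtain ⟨ts, hts, htsval⟩ : ∃ ts ∈ Set.Ioo (0:ℝ) t0,
        esymmF Finset.univ (k-1) (fun i => f i + ts) = 0 := by
      have hsub := intermediate_value_Ioo (le_of_lt ht0pos) hcont
      have h0mem : (0:ℝ) ∈ Set.Ioo (esymmF Finset.univ (k-1) (fun i => f i + 0))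
          (esymmF Finset.univ (k-1) (fun i => f i + t0)) := ⟨hg0, hgt0⟩
      obtain ⟨ts, hts, htsv⟩ := hsub h0mem
      exact ⟨ts, hts, htsv⟩
    set ν := μ.map (· + ts) with hν
    have hνcard : Multiset.card ν = Multiset.card μ := by rw [hν, Multiset.card_map]
    have hν0 : ν.esymm (k-1) = 0 := by rw [hν, hGg]; exact htsval
    have htspos : 0 < ts := hts.1
    -- ν.esymm k ≤ 0
    have hνk : ν.esymm k ≤ 0 := by
      rcases Nat.lt_or_ge (Multiset.card ν) k with hc | hc
      · rw [multiset_esymm_of_card_lt hc]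
      · have hdeg := newton_degenerate ν k hk hc hν0
        have hpos2 : 0 < ν.esymm (k-2) := by
          rcases Nat.eq_or_lt_of_le hk with h2 | h2
          · rw [← h2]
            norm_num [multiset_esymm_zero]
          · exact hgpos (k-2) (by omega) le_rfl ts htspos
        nlinarith
    -- contradiction with positivity of s-side
    have hs : (s.map (· + ts)).esymm k = ν.esymm k + (r + ts) * ν.esymm (k-1) := by
      rw [hcons, Multiset.map_cons, multiset_esymm_cons _ _ (by omega)]
    have hspos := hfpos k (by omega) le_rfl ts htspos
    rw [hs, hν0] at hspos
    nlinarith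
end GPF
end Stage5
section Stage6
namespace GPF
open Finset Polynomial Matrix

variable {R : Type*} [CommRing R] {n : ℕ}

lemma charmatrix_conj (U B V : Matrix (Fin n) (Fin n) R) (hUV : U * V = 1) :
    charmatrix (U * B * V) = (U.map C) * charmatrix B * (V.map C) := by
  have hmapmul : ∀ (A A' : Matrix (Fin n) (Fin n) R),
      (A * A').map (C : R → R[X]) = A.map C * A'.map C := fun A A' => by
    simpa [RingHom.mapMatrix_apply] using
      (map_mul (RingHom.mapMatrix (C : R →+* R[X])) A A')
  have hmapone : ((1 : Matrix (Fin n) (Fin n) R)).map (C : R → R[X]) = 1 := by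
    simpa [RingHom.mapMatrix_apply] using
      (map_one (RingHom.mapMatrix (C : R →+* R[X])))
  unfold charmatrix
  rw [Matrix.mul_sub, Matrix.sub_mul]
  congr 1
  · -- U' * scalar X * V' = scalar X
    rw [Matrix.scalar_apply]
    rw [← Matrix.smul_one_eq_diagonal]
    rw [Matrix.mul_smul, Matrix.smul_mul, mul_one, ← hmapmul, hUV, hmapone]
  · -- U' * mapC B * V' = mapC (U * B * V)
    simp only [RingHom.mapMatrix_apply]
    rw [hmapmul, hmapmul]

lemma charpoly_conj (U B V : Matrix (Fin n) (Fin n) R) (hUV : U * V = 1) (hVU : V * U = 1) :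
    (U * B * V).charpoly = B.charpoly := by
  unfold Matrix.charpoly
  rw [charmatrix_conj U B V hUV, Matrix.det_mul, Matrix.det_mul]
  have h1 : (U.map (C : R → R[X])).det * (V.map C).det = 1 := by
    rw [← Matrix.det_mul]
    have : (U.map (C : R → R[X])) * (V.map C) = 1 := by
      have := congrArg (fun A : Matrix (Fin n) (Fin n) R => A.map (C : R → R[X])) hUV
      simpa [RingHom.mapMatrix_apply] using
        (map_mul (RingHom.mapMatrix (C : R →+* R[X])) U V).symm.trans
          (by simpa [RingHom.mapMatrix_apply] using
            congrArg (RingHom.mapMatrix (C : R →+* R[X])) hUV)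
    rw [this, Matrix.det_one]
  calc (U.map (C : R → R[X])).det * (charmatrix B).det * (V.map C).det
      = ((U.map (C : R → R[X])).det * (V.map C).det) * (charmatrix B).det := by ring
    _ = (charmatrix B).det := by rw [h1, one_mul]

lemma charpoly_diagonal (d : Fin n → R) :
    (Matrix.diagonal d).charpoly = ∏ i, (X - C (d i)) := by
  unfold Matrix.charpoly
  have h : charmatrix (Matrix.diagonal d) = Matrix.diagonal (fun i => X - C (d i)) := by
    ext i j
    by_cases h : i = j
    · subst h; simp
    · simp [Matrix.charmatrix_apply_ne _ _ _ h, Matrix.diagonal_apply_ne _ h,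
        Matrix.diagonal_apply_ne d h]
  rw [h, Matrix.det_diagonal]

lemma charpoly_hermitian {M : Matrix (Fin n) (Fin n) ℂ} (hM : M.IsHermitian) :
    M.charpoly = ∏ i, (X - C ((hM.eigenvalues i : ℝ) : ℂ)) := by
  have hspec := hM.spectral_theorem
  set U : Matrix (Fin n) (Fin n) ℂ := (hM.eigenvectorUnitary : Matrix (Fin n) (Fin n) ℂ) with hU
  obtain ⟨hVU, hUV⟩ := hM.eigenvectorUnitary.2
  calc M.charpoly
      = (U * Matrix.diagonal (RCLike.ofReal ∘ hM.eigenvalues) * star U).charpoly := by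
        conv_lhs => rw [hspec, Unitary.conjStarAlgAut_apply]
    _ = (Matrix.diagonal (RCLike.ofReal ∘ hM.eigenvalues)).charpoly :=
        charpoly_conj U _ (star U) hUV hVU
    _ = ∏ i, (X - C ((hM.eigenvalues i : ℝ) : ℂ)) := charpoly_diagonal _

/-- real-part coefficient extraction -/
def eco (n k : ℕ) (M : Matrix (Fin n) (Fin n) ℂ) : ℝ :=
  (((-1:ℂ))^k * M.charpoly.coeff (n-k)).re

lemma coeff_prod_linear (k : ℕ) (hk : k ≤ n) (c : Fin n → ℝ) :
    ((-1:ℂ))^k * (∏ i, (X - C ((c i : ℝ) : ℂ))).coeff (n-k) = ((esymm n k c : ℝ) : ℂ) := by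
  have hprod : ∀ i : Fin n, (X - C ((c i : ℝ) : ℂ)) = X + C (-((c i : ℝ) : ℂ)) := fun i => by
    rw [map_neg, sub_eq_add_neg]
  rw [Finset.prod_congr rfl (fun i _ => hprod i)]
  have hcard : (Finset.univ : Finset (Fin n)).card = n := by simp
  have hco := Finset.prod_X_add_C_coeff (Finset.univ : Finset (Fin n))
    (fun i => -((c i : ℝ) : ℂ)) (k := n - k) (by omega)
  rw [hcard, show n - (n-k) = k by omega] at hco
  rw [hco]
  have hterm : ∀ T ∈ (Finset.univ : Finset (Fin n)).powersetCard k,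
      (∏ i ∈ T, (-((c i : ℝ) : ℂ))) = (-1:ℂ)^k * ((∏ i ∈ T, c i : ℝ) : ℂ) := by
    intro T hT
    rw [Finset.prod_congr rfl (fun i _ => by rw [neg_eq_neg_one_mul]),
      Finset.prod_mul_distrib, Finset.prod_const, (Finset.mem_powersetCard.1 hT).2]
    push_cast
    ring
  rw [Finset.sum_congr rfl hterm, ← Finset.mul_sum]
  rw [← mul_assoc, ← mul_pow]
  norm_num
  rw [esymm]
  push_cast
  ring
lemma eco_hermitian {M : Matrix (Fin n) (Fin n) ℂ} (hM : M.IsHermitian) (k : ℕ) (hk : k ≤ n) :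
    eco n k M = esymm n k hM.eigenvalues := by
  unfold eco
  rw [charpoly_hermitian hM, coeff_prod_linear k hk]
  simp

lemma isHermitian_smul_one {t : ℝ} : ((t:ℂ) • (1 : Matrix (Fin n) (Fin n) ℂ)).IsHermitian := by
  unfold Matrix.IsHermitian
  rw [Matrix.conjTranspose_smul, Matrix.conjTranspose_one]
  congr 1
  exact Complex.conj_ofReal t

lemma charpoly_add_smul_one (M : Matrix (Fin n) (Fin n) ℂ) (t : ℂ) :
    (M + t • 1).charpoly
      = Polynomial.eval₂RingHom (Polynomial.C : ℂ →+* ℂ[X]) (X - C t) M.charpoly := by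
  set φ := Polynomial.eval₂RingHom (Polynomial.C : ℂ →+* ℂ[X]) (X - C t) with hφ
  have hmat : charmatrix (M + t • 1) = (φ.mapMatrix) (charmatrix M) := by
    ext i j
    by_cases h : i = j
    · subst h
      simp only [Matrix.charmatrix_apply_eq, RingHom.mapMatrix_apply, Matrix.map_apply,
        Matrix.add_apply, Matrix.smul_apply, Matrix.one_apply_eq, hφ]
      rw [map_sub]
      simp [Polynomial.eval₂_X, Polynomial.eval₂_C]
      ring
    · simp only [Matrix.charmatrix_apply_ne _ _ _ h, RingHom.mapMatrix_apply, Matrix.map_apply,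
        Matrix.add_apply, Matrix.smul_apply, Matrix.one_apply_ne h, hφ]
      rw [map_neg]
      simp [Polynomial.eval₂_C]
  unfold Matrix.charpoly
  rw [hmat, ← RingHom.map_det]

lemma eco_shift {M : Matrix (Fin n) (Fin n) ℂ} (hM : M.IsHermitian) (t : ℝ) (k : ℕ)
    (hk : k ≤ n) :
    eco n k (M + (t:ℂ) • 1) = esymm n k (fun i => hM.eigenvalues i + t) := by
  unfold eco
  rw [charpoly_add_smul_one M ((t:ℂ)), charpoly_hermitian hM, map_prod]
  have hfac : ∀ i : Fin n,
      (Polynomial.eval₂RingHom (Polynomial.C : ℂ →+* ℂ[X]) (X - C ((t:ℝ):ℂ)))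
        (X - C ((hM.eigenvalues i : ℝ) : ℂ))
      = X - C (((hM.eigenvalues i + t : ℝ)) : ℂ) := fun i => by
    rw [map_sub]
    simp [Polynomial.eval₂_X, Polynomial.eval₂_C]
    push_cast
    ring
  rw [Finset.prod_congr rfl (fun i _ => hfac i)]
  rw [coeff_prod_linear k hk (fun i => hM.eigenvalues i + t)]
  simp

end GPF
end Stage6
section Stage7a
namespace GPF
open Finset Polynomial

set_option linter.unusedSectionVars false

variable {ι : Type*} [DecidableEq ι]

lemma coeff_zero_prod (T : Finset ι) (a b : ι → ℂ) :
    (∏ i ∈ T, (Polynomial.C (a i) + Polynomial.X * Polynomial.C (b i))).coeff 0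
      = ∏ i ∈ T, a i := by
  induction T using Finset.induction_on with
  | empty => simp
  | @insert x T hx ih =>
    rw [Finset.prod_insert hx, Finset.prod_insert hx, Polynomial.mul_coeff_zero, ih]
    simp

lemma coeff_one_prod (T : Finset ι) (a b : ι → ℂ) :
    (∏ i ∈ T, (Polynomial.C (a i) + Polynomial.X * Polynomial.C (b i))).coeff 1
      = ∑ i ∈ T, b i * ∏ j ∈ T.erase i, a j := by
  induction T using Finset.induction_on with
  | empty => simp [Polynomial.coeff_one]
  | @insert x T hx ih =>
    rw [Finset.prod_insert hx, Finset.sum_insert hx, Finset.erase_insert hx]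
    have hexp : ((Polynomial.C (a x) + Polynomial.X * Polynomial.C (b x))
        * ∏ i ∈ T, (Polynomial.C (a i) + Polynomial.X * Polynomial.C (b i))).coeff 1
        = a x * (∏ i ∈ T, (Polynomial.C (a i) + Polynomial.X * Polynomial.C (b i))).coeff 1
          + b x * (∏ i ∈ T, (Polynomial.C (a i) + Polynomial.X * Polynomial.C (b i))).coeff 0 := by
      rw [add_mul, Polynomial.coeff_add, Polynomial.coeff_C_mul, mul_assoc,
        Polynomial.coeff_X_mul, Polynomial.coeff_C_mul]
    rw [hexp, ih, coeff_zero_prod, Finset.mul_sum]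
    have hterm : ∀ i ∈ T, a x * (b i * ∏ j ∈ T.erase i, a j)
        = b i * ∏ j ∈ (insert x T).erase i, a j := by
      intro i hi
      have hxi : x ≠ i := fun h => hx (h ▸ hi)
      rw [Finset.erase_insert_of_ne hxi]
      rw [Finset.prod_insert (fun h => hx (Finset.mem_of_mem_erase h))]
      ring
    rw [Finset.sum_congr rfl hterm]
    ring

lemma coeff_one_of_sq_dvd {z : Polynomial ℂ} (h : (Polynomial.X : Polynomial ℂ)^2 ∣ z) :
    z.coeff 1 = 0 := by
  obtain ⟨w, rfl⟩ := h
  rw [mul_comm, Polynomial.coeff_mul_X_pow']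
  norm_num

lemma sum_pairs_swap {M : Type*} [AddCommMonoid M] {N : ℕ} (k : ℕ)
    (G : Fin N → Finset (Fin N) → M) :
    ∑ T ∈ (Finset.univ : Finset (Fin N)).powersetCard k, ∑ i ∈ Finset.univ \ T, G i T
      = ∑ i : Fin N, ∑ T ∈ (Finset.univ.erase i).powersetCard k, G i T := by
  rw [Finset.sum_sigma', Finset.sum_sigma']
  refine Finset.sum_nbij' (fun p => ⟨p.2, p.1⟩) (fun p => ⟨p.2, p.1⟩) ?_ ?_ ?_ ?_ ?_
  · rintro ⟨T, i⟩ hp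
    simp only [Finset.mem_sigma, Finset.mem_powersetCard, Finset.mem_sdiff] at hp ⊢
    refine ⟨Finset.mem_univ _, ?_, hp.1.2⟩
    intro x hx
    rw [Finset.mem_erase]
    exact ⟨fun hxi => hp.2.2 (hxi ▸ hx), Finset.mem_univ _⟩
  · rintro ⟨i, T⟩ hp
    simp only [Finset.mem_sigma, Finset.mem_powersetCard, Finset.mem_sdiff] at hp ⊢
    refine ⟨⟨Finset.subset_univ _, hp.2.2⟩, Finset.mem_univ _, ?_⟩
    intro hiT
    exact (Finset.mem_erase.1 (hp.2.1 hiT)).1 rfl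
  · rintro ⟨T, i⟩ _; rfl
  · rintro ⟨i, T⟩ _; rfl
  · rintro ⟨T, i⟩ _; rfl

lemma esymmF_hom (u : Finset ι) (k : ℕ) (g : ι → ℝ) :
    esymmF u k (fun i => ((g i : ℝ) : ℂ)) = ((esymmF u k g : ℝ) : ℂ) := by
  rw [esymmF_eq_multiset, esymmF_eq_multiset]
  have : (u.val.map (fun i => ((g i : ℝ) : ℂ))) = (u.val.map g).map (Complex.ofReal) := by
    rw [Multiset.map_map]
    rfl
  rw [this]
  exact multiset_esymm_map_hom (Complex.ofRealHom) _ k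

end GPF
end Stage7a
section Stage7b
namespace GPF
open Finset Polynomial Matrix

variable {n : ℕ}

/-- the coefficient of the characteristic polynomial of `M + x Q`, as a polynomial in `x` -/
def pathPoly (n k : ℕ) (M Q : Matrix (Fin n) (Fin n) ℂ) : Polynomial ℂ :=
  ((M.map (Polynomial.C : ℂ → Polynomial ℂ)
    + (Polynomial.X : Polynomial ℂ) • Q.map Polynomial.C).charpoly).coeff (n - k)

lemma pathPoly_eval (k : ℕ) (M Q : Matrix (Fin n) (Fin n) ℂ) (y : ℂ) :
    (pathPoly n k M Q).eval y = ((M + y • Q).charpoly).coeff (n - k) := by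
  have hmap : (M.map (Polynomial.C : ℂ → Polynomial ℂ)
      + (Polynomial.X : Polynomial ℂ) • Q.map Polynomial.C).map (Polynomial.evalRingHom y)
      = M + y • Q := by
    ext i j
    simp [Matrix.map_apply, Matrix.add_apply, Matrix.smul_apply, smul_eq_mul]
    ring
  rw [pathPoly, ← hmap, Matrix.charpoly_map, Polynomial.coeff_map, Polynomial.coe_evalRingHom]

lemma hasDerivAt_eco (k : ℕ) (M Q : Matrix (Fin n) (Fin n) ℂ) (x : ℝ) :
    HasDerivAt (fun x : ℝ => eco n k (M + (x:ℂ) • Q))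
      (((-1:ℂ))^k * (pathPoly n k M Q).derivative.eval ((x:ℝ):ℂ)).re x := by
  have h1 : HasDerivAt (fun z : ℂ => Polynomial.eval z (pathPoly n k M Q))
      ((pathPoly n k M Q).derivative.eval ((x:ℝ):ℂ)) ((x:ℝ):ℂ) := Polynomial.hasDerivAt _ _
  have h2 := h1.comp_ofReal
  have h3 := h2.const_mul ((-1:ℂ)^k)
  have h4 := Complex.reCLM.hasFDerivAt.comp_hasDerivAt x h3
  refine h4.congr_of_eventuallyEq (Filter.EventuallyEq.of_eq (funext fun y => ?_))
  show eco n k (M + (y:ℂ) • Q)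
    = Complex.reCLM ((-1:ℂ)^k * Polynomial.eval ((y:ℝ):ℂ) (pathPoly n k M Q))
  rw [eco, pathPoly_eval]
  rfl

lemma pathPoly_coeff_one_diag (k : ℕ) (hk1 : 1 ≤ k) (hkn : k ≤ n) (d : Fin n → ℝ)
    (R : Matrix (Fin n) (Fin n) ℂ) :
    ((-1:ℂ))^k * (pathPoly n k (Matrix.diagonal (fun i => ((d i : ℝ):ℂ))) R).coeff 1
      = ∑ i, R i i * ((esymmF (Finset.univ.erase i) (k-1) d : ℝ) : ℂ) := by
  classical
  set dC : Fin n → ℂ := fun i => ((d i : ℝ):ℂ) with hdC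
  set My : Matrix (Fin n) (Fin n) (Polynomial ℂ) :=
    (Matrix.diagonal dC).map Polynomial.C + (Polynomial.X : Polynomial ℂ) • R.map Polynomial.C
    with hMy
  set α : Fin n → Polynomial ℂ := fun i => Polynomial.C (dC i)
    + Polynomial.X * Polynomial.C (R i i) with hα
  have hMydiag : ∀ i, My i i = α i := by
    intro i
    rw [hMy, hα]
    simp [Matrix.add_apply, Matrix.map_apply, Matrix.smul_apply, Matrix.diagonal_apply_eq,
      smul_eq_mul]
  have hMyoff : ∀ i j, i ≠ j → My i j = Polynomial.X * Polynomial.C (R i j) := by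
    intro i j hij
    rw [hMy]
    simp [Matrix.add_apply, Matrix.map_apply, Matrix.smul_apply,
      Matrix.diagonal_apply_ne _ hij, smul_eq_mul]
  rw [pathPoly, Matrix.charpoly, Matrix.det_apply', Polynomial.finset_sum_coeff,
    Polynomial.finset_sum_coeff]
  have hterm : ∀ σ : Equiv.Perm (Fin n),
      (((((Equiv.Perm.sign σ : ℤ)) : Polynomial (Polynomial ℂ))
        * ∏ i, (Matrix.charmatrix My) (σ i) i).coeff (n-k)).coeff 1
      = ((Equiv.Perm.sign σ : ℤ) : ℂ)
        * (((∏ i, (Matrix.charmatrix My) (σ i) i).coeff (n-k)).coeff 1) := by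
    intro σ
    have h1 : (((Equiv.Perm.sign σ : ℤ)) : Polynomial (Polynomial ℂ))
        = Polynomial.C (Polynomial.C (((Equiv.Perm.sign σ : ℤ) : ℂ))) := by
      rw [← map_intCast (Polynomial.C : Polynomial ℂ →+* Polynomial (Polynomial ℂ)),
        ← map_intCast (Polynomial.C : ℂ →+* Polynomial ℂ)]
    rw [h1, Polynomial.coeff_C_mul, Polynomial.coeff_C_mul]
  rw [Finset.sum_congr rfl (fun σ _ => hterm σ)]
  -- all terms except σ = 1 vanish
  rw [Finset.sum_eq_single_of_mem (1 : Equiv.Perm (Fin n)) (Finset.mem_univ _) ?_]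
  swap
  · intro σ _ hσ
    have hsupp : 2 ≤ (Finset.univ.filter (fun i => ¬ σ i = i)).card := by
      have h := Equiv.Perm.one_lt_card_support_of_ne_one hσ
      exact h
    have hsplit := Finset.prod_filter_mul_prod_filter_not Finset.univ
      (fun i => σ i = i) (fun i => (Matrix.charmatrix My) (σ i) i)
    set F := Finset.univ.filter (fun i => σ i = i) with hF
    set F' := Finset.univ.filter (fun i => ¬ σ i = i) with hF'
    have hoff : ∀ i ∈ F', (Matrix.charmatrix My) (σ i) i
        = Polynomial.C (-((Polynomial.X : Polynomial ℂ) * Polynomial.C (R (σ i) i))) := by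
      intro i hi
      have hne : σ i ≠ i := by simpa [hF'] using hi
      rw [Matrix.charmatrix_apply_ne _ _ _ hne, hMyoff _ _ hne, map_neg]
    set c : Polynomial ℂ := ∏ i ∈ F', (-((Polynomial.X : Polynomial ℂ)
      * Polynomial.C (R (σ i) i))) with hc
    have hprodF' : ∏ i ∈ F', (Matrix.charmatrix My) (σ i) i
        = Polynomial.C c := by
      rw [Finset.prod_congr rfl hoff, hc, map_prod]
    have hdvd : (Polynomial.X : Polynomial ℂ)^2 ∣ c := by
      have h1 : ∏ _i ∈ F', (Polynomial.X : Polynomial ℂ) ∣ c := by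
        refine Finset.prod_dvd_prod_of_dvd _ _ fun i hi => ?_
        exact (dvd_mul_right _ _).neg_right
      rw [Finset.prod_const] at h1
      exact dvd_trans (pow_dvd_pow _ hsupp) h1
    have hX2 : (Polynomial.X : Polynomial ℂ)^2
        ∣ ((∏ i, (Matrix.charmatrix My) (σ i) i).coeff (n-k)) := by
      rw [← hsplit, hprodF', mul_comm, Polynomial.coeff_C_mul]
      exact Dvd.dvd.mul_right hdvd _
    rw [coeff_one_of_sq_dvd hX2, mul_zero]
  -- main term σ = 1
  have hone : ∀ i, (Matrix.charmatrix My) ((1 : Equiv.Perm (Fin n)) i) i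
      = (Polynomial.X : Polynomial (Polynomial ℂ)) + Polynomial.C (-(α i)) := by
    intro i
    show (Matrix.charmatrix My) i i = _
    rw [Matrix.charmatrix_apply_eq, hMydiag, map_neg, sub_eq_add_neg]
  rw [Finset.prod_congr rfl (fun i _ => hone i)]
  have hco := Finset.prod_X_add_C_coeff (Finset.univ : Finset (Fin n))
    (fun i => -(α i)) (k := n - k) (by simpa using Nat.sub_le n k)
  rw [show #(Finset.univ : Finset (Fin n)) = n by simp, show n - (n-k) = k by omega] at hco
  rw [hco]
  rw [Polynomial.finset_sum_coeff]
  have hT : ∀ T ∈ (Finset.univ : Finset (Fin n)).powersetCard k,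
      (∏ i ∈ T, -(α i)).coeff 1
      = (-1:ℂ)^k * ∑ i ∈ T, R i i * ∏ j ∈ T.erase i, dC j := by
    intro T hT
    have h1 : ∏ i ∈ T, -(α i) = (-1:Polynomial ℂ)^k * ∏ i ∈ T, α i := by
      rw [Finset.prod_congr rfl (fun i _ => neg_eq_neg_one_mul (α i)),
        Finset.prod_mul_distrib, Finset.prod_const, (Finset.mem_powersetCard.1 hT).2]
    rw [h1]
    have h2 : ((-1:Polynomial ℂ))^k = Polynomial.C ((-1:ℂ)^k) := by
      rw [map_pow, map_neg, Polynomial.C_1]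
    rw [h2, Polynomial.coeff_C_mul, hα]
    rw [coeff_one_prod T dC (fun i => R i i)]
  rw [Finset.sum_congr rfl hT, ← Finset.mul_sum]
  have hsign : ((Equiv.Perm.sign (1 : Equiv.Perm (Fin n)) : ℤ) : ℂ) = 1 := by simp
  rw [hsign, one_mul, ← mul_assoc, ← mul_pow]
  norm_num
  -- now the combinatorial identity
  obtain ⟨k', rfl⟩ : ∃ k', k = k' + 1 := ⟨k - 1, by omega⟩
  rw [sum_sum_erase Finset.univ k' (fun T i => R i i * ∏ j ∈ T, dC j)]
  rw [sum_pairs_swap k' (fun i T => R i i * ∏ j ∈ T, dC j)]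
  simp only [Nat.add_sub_cancel]
  refine Finset.sum_congr rfl fun i _ => ?_
  rw [← Finset.mul_sum]
  congr 1
  rw [← esymmF_hom]
  rfl

end GPF
end Stage7b
section Stage8
namespace GPF
open Finset Polynomial Matrix

variable {n : ℕ}

lemma mapC_mul (A B : Matrix (Fin n) (Fin n) ℂ) :
    (A * B).map (Polynomial.C : ℂ → Polynomial ℂ) = A.map Polynomial.C * B.map Polynomial.C := by
  simpa [RingHom.mapMatrix_apply] using
    (map_mul (RingHom.mapMatrix (Polynomial.C : ℂ →+* Polynomial ℂ)) A B)

lemma mapC_one : ((1 : Matrix (Fin n) (Fin n) ℂ)).map (Polynomial.C : ℂ → Polynomial ℂ) = 1 := by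
  simpa [RingHom.mapMatrix_apply] using
    (map_one (RingHom.mapMatrix (Polynomial.C : ℂ →+* Polynomial ℂ)))

lemma pathPoly_conj (k : ℕ) (U V D R : Matrix (Fin n) (Fin n) ℂ)
    (hUV : U * V = 1) (hVU : V * U = 1) :
    pathPoly n k (U * D * V) (U * R * V) = pathPoly n k D R := by
  unfold pathPoly
  congr 1
  have key : (U * D * V).map (Polynomial.C : ℂ → Polynomial ℂ)
        + (Polynomial.X : Polynomial ℂ) • (U * R * V).map Polynomial.C
      = (U.map Polynomial.C) * ((D.map Polynomial.C)
        + (Polynomial.X : Polynomial ℂ) • (R.map Polynomial.C)) * (V.map Polynomial.C) := by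
    rw [Matrix.mul_add, Matrix.add_mul]
    congr 1
    · rw [mapC_mul, mapC_mul]
    · rw [Matrix.mul_smul, Matrix.smul_mul, mapC_mul, mapC_mul]
  rw [key]
  exact charpoly_conj (U.map Polynomial.C) _ (V.map Polynomial.C)
    (by rw [← mapC_mul, hUV, mapC_one]) (by rw [← mapC_mul, hVU, mapC_one])

lemma conj_entry_nonneg {P : Matrix (Fin n) (Fin n) ℂ} (hP : P.PosSemidef)
    (U : Matrix (Fin n) (Fin n) ℂ) (i : Fin n) :
    0 ≤ ((star U * P * U) i i).re := by
  have h := hP.dotProduct_mulVec_nonneg (fun a => U a i)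
  have hentry : (star U * P * U) i i
      = dotProduct (star (fun a => U a i)) (P *ᵥ (fun a => U a i)) := by
    simp only [Matrix.mul_apply, dotProduct, Matrix.mulVec, Matrix.star_apply,
      Pi.star_apply, Finset.sum_mul, Finset.mul_sum]
    rw [Finset.sum_comm]
    exact Finset.sum_congr rfl fun a _ => Finset.sum_congr rfl fun b _ => by ring
  rw [hentry]
  have h2 := (Complex.le_def.mp h).1
  simpa using h2

lemma isHermitian_real_smul {Q : Matrix (Fin n) (Fin n) ℂ} (h : Q.IsHermitian) (x : ℝ) :
    (((x:ℝ):ℂ) • Q).IsHermitian := by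
  unfold Matrix.IsHermitian at *
  rw [Matrix.conjTranspose_smul, h]
  congr 1
  exact Complex.conj_ofReal x

lemma sum_esymmF_erase (k' : ℕ) (d : Fin n → ℝ) :
    ∑ i, esymmF (Finset.univ.erase i) k' d = ((n - k' : ℕ) : ℝ) * esymm n k' d := by
  unfold esymmF
  rw [← sum_pairs_swap k' (fun i T => ∏ j ∈ T, d j)]
  rw [esymm, Finset.mul_sum]
  refine Finset.sum_congr rfl fun T hT => ?_
  rw [Finset.sum_const, Finset.card_sdiff_of_subset (Finset.subset_univ _), Finset.card_univ,
    Fintype.card_fin, (Finset.mem_powersetCard.1 hT).2]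
  simp

lemma map_erase_eq (d : Fin n → ℝ) (i : Fin n) :
    (Finset.univ.val.map d).erase (d i) = (Finset.univ.erase i).val.map d := by
  have hmem : i ∈ (Finset.univ : Finset (Fin n)).val := Finset.mem_val.mpr (Finset.mem_univ i)
  have h1 : (Finset.univ : Finset (Fin n)).val
      = i ::ₘ (Finset.univ : Finset (Fin n)).val.erase i := (Multiset.cons_erase hmem).symm
  rw [Finset.erase_val]
  conv_lhs => rw [h1]
  rw [Multiset.map_cons, Multiset.erase_cons_head]

end GPF
end Stage8
section Stage9
namespace GPF
open Finset Polynomial Matrix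

variable {n : ℕ}

lemma eco_zero (M : Matrix (Fin n) (Fin n) ℂ) : eco n 0 M = 1 := by
  unfold eco
  rw [pow_zero, one_mul, Nat.sub_zero]
  have hdeg : M.charpoly.natDegree = n := by
    rw [Matrix.charpoly_natDegree_eq_dim]
    exact Fintype.card_fin n
  have h1 := (Matrix.charpoly_monic M).coeff_natDegree
  rw [hdeg] at h1
  rw [h1]
  simp

lemma mem_closure_gardingCone_of_shift {m : ℕ} {lam : Fin n → ℝ}
    (h : ∀ u : ℝ, 0 < u → (fun i => lam i + u) ∈ gardingCone n m) :
    lam ∈ closure (gardingCone n m) := by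
  have htend : Filter.Tendsto (fun j : ℕ => fun i => lam i + 1/(j+1 : ℝ)) Filter.atTop
      (nhds lam) := by
    rw [tendsto_pi_nhds]
    intro i
    have : Filter.Tendsto (fun j : ℕ => 1/(j+1 : ℝ)) Filter.atTop (nhds 0) :=
      tendsto_one_div_add_atTop_nhds_zero_nat
    simpa using (tendsto_const_nhds (x := lam i)).add this
  refine mem_closure_of_tendsto htend (Filter.Eventually.of_forall fun j => ?_)
  exact h _ (by positivity)

theorem bootstrap (m : ℕ) (hm : 1 ≤ m) (hmn : m ≤ n)
    (A P : Matrix (Fin n) (Fin n) ℂ) (hA : A.IsHermitian)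
    (hAg : ∀ j, 1 ≤ j → j ≤ m → 0 ≤ esymm n j hA.eigenvalues)
    (hP : P.PosSemidef) (t δ : ℝ) (ht : 0 < t) (hδ : 0 < δ) :
    ∀ k ≤ m, ∀ x ∈ Set.Icc (0:ℝ) 1,
      0 < eco n k (A + ((t:ℝ):ℂ) • 1 + ((x:ℝ):ℂ) • (P + ((δ:ℝ):ℂ) • 1)) := by
  intro k
  induction k using Nat.strong_induction_on with
  | _ k ih =>
    intro hkm x hx
    set Q : Matrix (Fin n) (Fin n) ℂ := P + ((δ:ℝ):ℂ) • 1 with hQdef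
    have hQherm : Q.IsHermitian := hP.1.add isHermitian_smul_one
    have hAt : (A + ((t:ℝ):ℂ) • 1).IsHermitian := hA.add isHermitian_smul_one
    have hMherm : ∀ y : ℝ, (A + ((t:ℝ):ℂ) • 1 + ((y:ℝ):ℂ) • Q).IsHermitian :=
      fun y => hAt.add (isHermitian_real_smul hQherm y)
    rcases Nat.eq_zero_or_pos k with hk0 | hk1
    · subst hk0; rw [eco_zero]; norm_num
    set h : ℝ → ℝ := fun y => eco n k (A + ((t:ℝ):ℂ) • 1 + ((y:ℝ):ℂ) • Q) with hh
    have hcont : Continuous h := by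
      refine continuous_iff_continuousAt.2 fun y => ?_
      exact (hasDerivAt_eco k (A + ((t:ℝ):ℂ) • 1) Q y).continuousAt
    have hzero : 0 < h 0 := by
      have heq : A + ((t:ℝ):ℂ) • 1 + (((0:ℝ)):ℂ) • Q = A + ((t:ℝ):ℂ) • 1 := by
        norm_num
      rw [hh]
      simp only
      rw [heq, eco_shift hA t k (by omega)]
      exact esymmF_shift_pos (Finset.univ : Finset (Fin n)) m (by simpa using hmn)
        hA.eigenvalues (fun j h1 h2 => hAg j h1 h2) k hkm t ht
    by_contra hcon
    push_neg at hcon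
    have hconh : h x ≤ 0 := hcon
    set Z : Set ℝ := Set.Icc (0:ℝ) 1 ∩ h ⁻¹' (Set.Iic 0) with hZdef
    have hZne : Z.Nonempty := ⟨x, hx, hconh⟩
    have hZclosed : IsClosed Z := isClosed_Icc.inter (isClosed_Iic.preimage hcont)
    have hZbdd : BddBelow Z := ⟨0, fun y hy => hy.1.1⟩
    set xs : ℝ := sInf Z with hxs
    have hxsZ : xs ∈ Z := hZclosed.csInf_mem hZne hZbdd
    have hxs1 : xs ≤ 1 := hxsZ.1.2
    have hxsle : h xs ≤ 0 := hxsZ.2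
    have hxs0 : 0 < xs := by
      rcases lt_or_eq_of_le hxsZ.1.1 with h' | h'
      · exact h'
      · exfalso; rw [← h'] at hxsle; linarith
    have hlt : ∀ y, 0 ≤ y → y < xs → 0 < h y := by
      intro y hy0 hyxs
      by_contra hyn
      push_neg at hyn
      have : y ∈ Z := ⟨⟨hy0, by linarith⟩, hyn⟩
      have := csInf_le hZbdd this
      rw [← hxs] at this
      linarith
    have hxseq : h xs = 0 := by
      refine le_antisymm hxsle ?_
      have htd : Filter.Tendsto h (nhdsWithin xs (Set.Iio xs)) (nhds (h xs)) :=
        (hcont.tendsto xs).mono_left nhdsWithin_le_nhds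
      refine ge_of_tendsto htd ?_
      filter_upwards [Ioo_mem_nhdsLT hxs0] with y hy
      exact (hlt y hy.1.le hy.2).le
    -- eigen data at xs
    set Mxs : Matrix (Fin n) (Fin n) ℂ := A + ((t:ℝ):ℂ) • 1 + ((xs:ℝ):ℂ) • Q with hMxsdef
    have hMxs : Mxs.IsHermitian := hMherm xs
    set d : Fin n → ℝ := hMxs.eigenvalues with hd
    have hdj : ∀ j, 1 ≤ j → j < k → 0 < esymm n j d := by
      intro j h1 h2
      have := ih j h2 (by omega) xs ⟨hxs0.le, hxs1⟩
      rwa [eco_hermitian hMxs j (by omega)] at this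
    have hdk : esymm n k d = 0 := by
      rw [← eco_hermitian hMxs k (by omega)]
      exact hxseq
    have hesymm_ms : ∀ j, (Finset.univ.val.map d).esymm j = esymm n j d := by
      intro j
      rw [esymm_eq_esymmF, esymmF_eq_multiset]
    have hrestrict : ∀ i, 0 ≤ esymmF (Finset.univ.erase i) (k-1) d := by
      intro i
      have hcard : Multiset.card (Finset.univ.val.map d) = n := by
        rw [Multiset.card_map]
        simp
      have hmem : d i ∈ Finset.univ.val.map d :=
        Multiset.mem_map_of_mem d (Finset.mem_val.mpr (Finset.mem_univ i))
      have := restriction k (Finset.univ.val.map d) hk1 (by omega)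
        (fun j hj1 hj2 => by
          rw [hesymm_ms]
          rcases Nat.eq_or_lt_of_le hj2 with he | hl
          · rw [he, hdk]
          · exact (hdj j hj1 hl).le) (d i) hmem
      rwa [map_erase_eq, ← esymmF_eq_multiset] at this
    -- spectral data
    set U : Matrix (Fin n) (Fin n) ℂ := (hMxs.eigenvectorUnitary : Matrix (Fin n) (Fin n) ℂ)
      with hU
    obtain ⟨hVU, hUV⟩ := hMxs.eigenvectorUnitary.2
    have hspec := hMxs.spectral_theorem
    set R : Matrix (Fin n) (Fin n) ℂ := star U * Q * U with hR
    have hQconj : U * R * star U = Q := by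
      rw [hR]
      have hassoc : U * (star U * Q * U) * star U = (U * star U) * (Q * (U * star U)) := by
        simp only [Matrix.mul_assoc]
      rw [hassoc, hUV, one_mul, mul_one]
    have hdiagC : Matrix.diagonal ((RCLike.ofReal : ℝ → ℂ) ∘ d)
        = Matrix.diagonal (fun i => ((d i:ℝ):ℂ)) := rfl
    have hpp : pathPoly n k Mxs Q = pathPoly n k (Matrix.diagonal (fun i => ((d i:ℝ):ℂ))) R := by
      conv_lhs => rw [show Mxs = U * Matrix.diagonal ((RCLike.ofReal : ℝ → ℂ) ∘ d) * star U
        from hspec, ← hQconj]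
      rw [hdiagC]
      exact pathPoly_conj k U (star U) _ R hUV hVU
    -- derivative of h at xs
    have hinner := hasDerivAt_eco k Mxs Q 0
    have hsub : HasDerivAt (fun y : ℝ => y - xs) 1 xs := by
      simpa using (hasDerivAt_id xs).sub_const xs
    set Dval : ℝ := ((-1:ℂ)^k * (pathPoly n k Mxs Q).derivative.eval (((0:ℝ)):ℂ)).re with hDval
    have hcomp : HasDerivAt (fun y : ℝ => eco n k (Mxs + (((y - xs : ℝ)):ℂ) • Q)) (Dval * 1) xs := by
      have h0 : ((fun y : ℝ => y - xs) xs) = (0:ℝ) := sub_self xs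
      exact HasDerivAt.comp xs (h0 ▸ hinner) hsub
    have hfun : ∀ y : ℝ, Mxs + (((y - xs : ℝ)):ℂ) • Q = A + ((t:ℝ):ℂ) • 1 + ((y:ℝ):ℂ) • Q := by
      intro y
      rw [hMxsdef, Complex.ofReal_sub, sub_smul]
      abel
    have hD : HasDerivAt h (Dval * 1) xs := by
      refine hcomp.congr_of_eventuallyEq (Filter.EventuallyEq.of_eq (funext fun y => ?_))
      rw [hh]
      simp only
      rw [hfun y]
    -- derivative value is positive
    have hcoeff : (pathPoly n k Mxs Q).derivative.eval (((0:ℝ)):ℂ)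
        = (pathPoly n k Mxs Q).coeff 1 := by
      rw [Complex.ofReal_zero, ← Polynomial.coeff_zero_eq_eval_zero, Polynomial.coeff_derivative]
      norm_num
    have hDform : Dval = ∑ i, ((R i i).re * esymmF (Finset.univ.erase i) (k-1) d) := by
      rw [hDval, hcoeff, hpp, pathPoly_coeff_one_diag k hk1 (by omega) d R]
      rw [Complex.re_sum]
      refine Finset.sum_congr rfl fun i _ => ?_
      simp [Complex.mul_re]
    have hRentry : ∀ i, δ ≤ (R i i).re := by
      intro i
      have hsplit : R = star U * P * U + ((δ:ℝ):ℂ) • 1 := by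
        rw [hR, hQdef, Matrix.mul_add, Matrix.add_mul]
        rw [Matrix.mul_smul, Matrix.smul_mul, Matrix.mul_one, hVU]
      rw [hsplit]
      have h1 := conj_entry_nonneg hP U i
      have h2 : ((star U * P * U + ((δ:ℝ):ℂ) • 1) i i).re
          = ((star U * P * U) i i).re + δ := by
        simp [Matrix.add_apply, Matrix.smul_apply, Matrix.one_apply_eq]
      rw [h2]
      linarith
    have hesymmpos : 0 < esymm n (k-1) d := by
      rcases Nat.eq_or_lt_of_le hk1 with h1 | h1
      · rw [← h1]
        norm_num
        rw [esymm_eq_esymmF, esymmF_zero]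
        norm_num
      · exact hdj (k-1) (by omega) (by omega)
    have hDpos : 0 < Dval := by
      rw [hDform]
      have hbound : ∑ i, (δ * esymmF (Finset.univ.erase i) (k-1) d)
          ≤ ∑ i, ((R i i).re * esymmF (Finset.univ.erase i) (k-1) d) :=
        Finset.sum_le_sum fun i _ =>
          mul_le_mul_of_nonneg_right (hRentry i) (hrestrict i)
      have hsum : ∑ i, (δ * esymmF (Finset.univ.erase i) (k-1) d)
          = δ * (((n - (k-1) : ℕ)):ℝ) * esymm n (k-1) d := by
        rw [← Finset.mul_sum, sum_esymmF_erase, mul_assoc]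
      have hnk : (0:ℝ) < (((n - (k-1) : ℕ)):ℝ) := by
        have : 1 ≤ n - (k-1) := by omega
        exact_mod_cast Nat.lt_of_lt_of_le Nat.zero_lt_one this
      have : 0 < δ * (((n - (k-1) : ℕ)):ℝ) * esymm n (k-1) d := by positivity
      linarith [hbound, hsum.symm ▸ this]
    -- but left slopes are nonpositive
    have hslope : Dval * 1 ≤ 0 := by
      have htend := hD.hasDerivWithinAt (s := Set.Iio xs)
      rw [hasDerivWithinAt_iff_tendsto_slope] at htend
      have hset : Set.Iio xs \ {xs} = Set.Iio xs :=
        Set.diff_singleton_eq_self (fun hmem => lt_irrefl xs hmem)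
      rw [hset] at htend
      refine le_of_tendsto htend ?_
      filter_upwards [Ioo_mem_nhdsLT hxs0] with y hy
      have hnum : 0 ≤ h y - h xs := by
        rw [hxseq, sub_zero]
        exact (hlt y hy.1.le hy.2).le
      have hden : y - xs < 0 := by linarith [hy.2]
      rw [slope_def_field]
      exact div_nonpos_of_nonneg_of_nonpos hnum hden.le
    linarith
end GPF
end Stage9
/-- Adding a positive semidefinite Hermitian matrix preserves the condition
`λ(A) ∈ Γ̄_m` on the eigenvalue vector. -/
theorem gardingCone_add_posSemidef
    (n m : ℕ) (hm : 1 ≤ m) (hmn : m ≤ n)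
    (A P : Matrix (Fin n) (Fin n) ℂ)
    (hA : A.IsHermitian)
    (hAg : hA.eigenvalues ∈ closure (gardingCone n m))
    (hP : P.PosSemidef) :
    ∃ h : (A + P).IsHermitian,
      h.eigenvalues ∈ closure (gardingCone n m) := by
  classical
  have hherm : (A + P).IsHermitian := hA.add hP.1
  refine ⟨hherm, ?_⟩
  have hAg' : ∀ j, 1 ≤ j → j ≤ m → 0 ≤ esymm n j hA.eigenvalues :=
    GPF.esymm_nonneg_of_mem_closure hAg
  refine GPF.mem_closure_gardingCone_of_shift ?_
  intro u hu
  intro k hk1 hk2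
  have hb := GPF.bootstrap m hm hmn A P hA hAg' hP (u/2) (u/2) (by linarith) (by linarith)
    k hk2 1 (by norm_num)
  have hmat : A + ((u/2 : ℝ):ℂ) • 1 + (((1:ℝ)):ℂ) • (P + ((u/2:ℝ):ℂ) • 1)
      = (A + P) + ((u:ℝ):ℂ) • (1 : Matrix (Fin n) (Fin n) ℂ) := by
    push_cast
    rw [one_smul]
    rw [show ((u:ℂ)) • (1 : Matrix (Fin n) (Fin n) ℂ)
      = ((u:ℂ)/2) • 1 + ((u:ℂ)/2) • (1 : Matrix (Fin n) (Fin n) ℂ) by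
        rw [← add_smul]; norm_num]
    abel
  rw [hmat] at hb
  rw [GPF.eco_shift hherm u k (by omega)] at hb
  exact hb
end
end

section
/- For an n×n complex Hermitian matrix M let F_m(M) := σ_m(λ(M)) (1 ≤ m ≤ n). Let A be Hermitian with λ(A) ∈ Γ̄_m and let B be positive semidefinite Hermitian. Then the function t ↦ F_m(A + tB) is nondecreasing on [0, ∞). -/
open scoped ComplexOrder

noncomputable section

/-- `F_m(M) = σ_m(λ(M))` for Hermitian `M` (junk value `0` otherwise). -/
def sigmaEigen (n m : ℕ) (A : Matrix (Fin n) (Fin n) ℂ) : ℝ :=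
  if h : A.IsHermitian then esymm n m h.eigenvalues else 0

namespace SigmaAux

open Polynomial

/-! ### Core facts about elementary symmetric functions of real multisets -/

/-- The polynomial `∏ (X + r)` over a multiset of reals. -/
def qpoly (μ : Multiset ℝ) : ℝ[X] := (μ.map fun r => X + C r).prod

lemma qpoly_monic (μ : Multiset ℝ) : (qpoly μ).Monic := by
  exact monic_multiset_prod_of_monic μ _ fun r _ => monic_X_add_C r

lemma qpoly_natDegree (μ : Multiset ℝ) : (qpoly μ).natDegree = Multiset.card μ := by
  rw [qpoly, natDegree_multiset_prod_of_monic]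
  · rw [Multiset.map_map]
    simp [Function.comp_def, natDegree_X_add_C]
  · intro f hf
    obtain ⟨r, -, rfl⟩ := Multiset.mem_map.mp hf
    exact monic_X_add_C r

lemma qpoly_roots (μ : Multiset ℝ) : (qpoly μ).roots = μ.map (fun r => -r) := by
  have h : qpoly μ = ((μ.map (fun r => -r)).map fun a => X - C a).prod := by
    rw [Multiset.map_map]
    unfold qpoly
    congr 1
    apply Multiset.map_congr rfl
    intro r _
    simp [sub_neg_eq_add]
  rw [h, roots_multiset_prod_X_sub_C]

lemma qpoly_coeff (μ : Multiset ℝ) {j : ℕ} (hj : j ≤ Multiset.card μ) :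
    (qpoly μ).coeff j = μ.esymm (Multiset.card μ - j) :=
  Multiset.prod_X_add_C_coeff μ hj

lemma esymm_zero' (μ : Multiset ℝ) : μ.esymm 0 = 1 := by
  simp [Multiset.esymm]

lemma esymm_eq_zero_of_lt {μ : Multiset ℝ} {j : ℕ} (h : Multiset.card μ < j) :
    μ.esymm j = 0 := by
  rw [Multiset.esymm, Multiset.powersetCard_eq_empty _ h]
  simp

lemma sum_nonneg' {s : Multiset ℝ} (h : ∀ x ∈ s, 0 ≤ x) : 0 ≤ s.sum := by
  induction s using Multiset.induction with
  | empty => simp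
  | cons a t ih =>
    rw [Multiset.sum_cons]
    have := h a (Multiset.mem_cons_self a t)
    have := ih (fun x hx => h x (Multiset.mem_cons_of_mem hx))
    linarith

/-- elementary symmetric functions of a multiset of positive reals are positive. -/
lemma esymm_pos {μ : Multiset ℝ} (hpos : ∀ x ∈ μ, 0 < x) {j : ℕ}
    (hj : j ≤ Multiset.card μ) : 0 < μ.esymm j := by
  have hne : (μ.powersetCard j) ≠ 0 := by
    rw [← Multiset.card_pos, Multiset.card_powersetCard]
    exact Nat.choose_pos hj
  obtain ⟨t, ht⟩ := Multiset.exists_mem_of_ne_zero hne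
  obtain ⟨w, hw⟩ := Multiset.exists_cons_of_mem (Multiset.mem_map_of_mem Multiset.prod ht)
  rw [Multiset.esymm, hw, Multiset.sum_cons]
  have htpos : (0:ℝ) < t.prod := by
    apply Multiset.prod_pos
    intro a ha
    exact hpos a (Multiset.mem_of_le (Multiset.mem_powersetCard.mp ht).1 ha)
  have hwnn : (0:ℝ) ≤ w.sum := by
    apply sum_nonneg'
    intro x hx
    have hx' : x ∈ (μ.powersetCard j).map Multiset.prod := by
      rw [hw]; exact Multiset.mem_cons_of_mem hx
    obtain ⟨u, hu, rfl⟩ := Multiset.mem_map.mp hx'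
    exact le_of_lt <| Multiset.prod_pos fun a ha =>
      hpos a (Multiset.mem_of_le (Multiset.mem_powersetCard.mp hu).1 ha)
  linarith

lemma deriv_stats {p : ℝ[X]} (h : Multiset.card p.roots = p.natDegree) :
    Multiset.card (derivative p).roots = p.natDegree - 1 ∧
      (derivative p).natDegree = p.natDegree - 1 := by
  have h1 := p.card_roots_le_derivative
  have h2 : (derivative p).natDegree ≤ p.natDegree - 1 := natDegree_derivative_le p
  have h3 : Multiset.card (derivative p).roots ≤ (derivative p).natDegree :=
    (derivative p).card_roots'
  omega

lemma iterate_deriv_stats {p : ℝ[X]} (h : Multiset.card p.roots = p.natDegree) (k : ℕ) :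
    Multiset.card (derivative^[k] p).roots = p.natDegree - k ∧
      (derivative^[k] p).natDegree = p.natDegree - k := by
  induction k with
  | zero => exact ⟨by simpa using h, by simp⟩
  | succ k ih =>
    rw [Function.iterate_succ_apply']
    have hst := deriv_stats (p := derivative^[k] p) (by rw [ih.1, ih.2])
    rw [ih.2] at hst
    omega

/-- If `e_1,…,e_{k-1} ≥ 0` and `e_k > 0` then `e_1,…,e_k > 0`. -/
lemma esymm_pos_of_nonneg {μ : Multiset ℝ} {k : ℕ} (hk1 : 1 ≤ k)
    (hkc : k ≤ Multiset.card μ)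
    (hnn : ∀ j, 1 ≤ j → j < k → 0 ≤ μ.esymm j) (hpos : 0 < μ.esymm k) :
    ∀ j, 1 ≤ j → j ≤ k → 0 < μ.esymm j := by
  set N := Multiset.card μ with hN
  set P := derivative^[N - k] (qpoly μ) with hP
  have hq : Multiset.card (qpoly μ).roots = (qpoly μ).natDegree := by
    rw [qpoly_roots, qpoly_natDegree, Multiset.card_map]
  have hstats := iterate_deriv_stats hq (N - k)
  rw [qpoly_natDegree] at hstats
  have hdeg : P.natDegree = k := by rw [hP, hstats.2]; omega
  have hcard : Multiset.card P.roots = k := by rw [hP, hstats.1]; omega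
  have hcoeff : ∀ i, i ≤ k → P.coeff i =
      ((i + (N - k)).descFactorial (N - k) : ℝ) * μ.esymm (k - i) := by
    intro i hi
    rw [hP, Polynomial.coeff_iterate_derivative, qpoly_coeff μ (by omega), nsmul_eq_mul]
    congr 2
    omega
  have hdfpos : ∀ i : ℕ, (0:ℝ) < ((i + (N - k)).descFactorial (N - k) : ℝ) := by
    intro i
    have : (i + (N - k)).descFactorial (N - k) ≠ 0 := by
      rw [Ne, Nat.descFactorial_eq_zero_iff_lt]
      omega
    exact_mod_cast Nat.pos_of_ne_zero this
  have hesnn : ∀ i, i ≤ k → 0 ≤ μ.esymm (k - i) := by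
    intro i hi
    rcases Nat.eq_zero_or_pos i with rfl | hi0
    · simpa using hpos.le
    rcases Nat.eq_zero_or_pos (k - i) with h0 | h0
    · rw [h0, esymm_zero']; norm_num
    · exact hnn _ h0 (by omega)
  have hcnn : ∀ i, 0 ≤ P.coeff i := by
    intro i
    rcases le_or_gt i k with hik | hik
    · rw [hcoeff i hik]
      exact mul_nonneg (hdfpos i).le (hesnn i hik)
    · rw [coeff_eq_zero_of_natDegree_lt (by omega)]
  have h0pos : 0 < P.coeff 0 := by
    rw [hcoeff 0 (by omega)]
    exact mul_pos (hdfpos 0) (by simpa using hpos)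
  have hPne : P ≠ 0 := fun h => by simp [h] at h0pos
  have hroots_neg : ∀ r ∈ P.roots, r < 0 := by
    intro r hr
    have heval : P.eval r = 0 := (Polynomial.mem_roots hPne).mp hr
    by_contra hge
    push_neg at hge
    have hpos' : 0 < P.eval r := by
      rw [Polynomial.eval_eq_sum_range]
      apply Finset.sum_pos'
      · intro i _
        exact mul_nonneg (hcnn i) (pow_nonneg hge i)
      · refine ⟨0, Finset.mem_range.mpr (Nat.succ_pos _), by simpa using h0pos⟩
    linarith
  have hlead : 0 < P.leadingCoeff := by
    rw [Polynomial.leadingCoeff, hdeg, hcoeff k le_rfl]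
    simpa [esymm_zero'] using hdfpos k
  have hcpos : ∀ i, i ≤ k → 0 < P.coeff i := by
    intro i hik
    have hmap : (P.roots.map fun a => X - C a).prod
        = ((P.roots.map fun a => -a).map fun b => X + C b).prod := by
      rw [Multiset.map_map]
      congr 1
      apply Multiset.map_congr rfl
      intro r _
      simp [sub_eq_add_neg]
    have hcard' : Multiset.card (P.roots.map fun a => -a) = k := by
      rw [Multiset.card_map, hcard]
    have hre : P.coeff i
        = (C P.leadingCoeff * (P.roots.map fun a => X - C a).prod).coeff i := by
      rw [C_leadingCoeff_mul_prod_multiset_X_sub_C (by rw [hcard, hdeg])]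
    rw [hre, coeff_C_mul, hmap,
      Multiset.prod_X_add_C_coeff _ (le_of_le_of_eq hik hcard'.symm)]
    apply mul_pos hlead
    apply esymm_pos
    · intro x hx
      obtain ⟨r, hr, rfl⟩ := Multiset.mem_map.mp hx
      have := hroots_neg r hr
      linarith
    · exact Nat.sub_le _ _
  intro j hj1 hj2
  have h2 := hcpos (k - j) (by omega)
  rw [hcoeff (k - j) (by omega)] at h2
  have hkj : k - (k - j) = j := by omega
  rw [hkj] at h2
  by_contra hcon
  push_neg at hcon
  nlinarith [hdfpos (k - j)]

lemma esymm_cons (a : ℝ) (ν : Multiset ℝ) {j : ℕ} (hj : 1 ≤ j) :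
    (a ::ₘ ν).esymm j = ν.esymm j + a * ν.esymm (j - 1) := by
  obtain ⟨i, rfl⟩ := Nat.exists_eq_add_of_le hj
  rw [Nat.add_comm 1 i]
  rw [Multiset.esymm, Multiset.powersetCard_cons, Multiset.map_add, Multiset.sum_add]
  congr 1
  rw [Multiset.map_map]
  have : ((Multiset.powersetCard i ν).map fun t => (Multiset.prod ∘ Multiset.cons a) t).sum
      = ((Multiset.powersetCard i ν).map fun t => a * t.prod).sum := by
    congr 1
    apply Multiset.map_congr rfl
    intro t _
    simp [Multiset.prod_cons]
  rw [this, Multiset.sum_map_mul_left]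
  simp [Multiset.esymm]

/-- Removing one entry from a multiset strictly inside the Gårding cone. -/
lemma remove_one_strict {a : ℝ} {ν : Multiset ℝ} : ∀ {k : ℕ},
    (∀ j, 1 ≤ j → j ≤ k → 0 < (a ::ₘ ν).esymm j) →
    ∀ j, 1 ≤ j → j + 1 ≤ k → 0 < ν.esymm j := by
  intro k
  induction k with
  | zero => intro _ j _ h2; omega
  | succ k ih =>
    intro h j hj1 hj2
    rcases lt_or_eq_of_le hj2 with hlt | heq
    · exact ih (fun i h1 h2 => h i h1 (by omega)) j hj1 (by omega)
    -- j = k, k ≥ 1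
    have hjk : j = k := by omega
    subst hjk
    by_contra hcon
    push_neg at hcon
    -- slopes
    have hslope : ∀ i, 1 ≤ i → i ≤ j → 0 < ν.esymm (i - 1) := by
      intro i h1 h2
      rcases Nat.eq_zero_or_pos (i - 1) with h0 | h0
      · rw [h0, esymm_zero']; norm_num
      · exact ih (fun l l1 l2 => h l l1 (by omega)) (i - 1) h0 (by omega)
    have hcards : j + 1 ≤ Multiset.card ν + 1 := by
      by_contra hc
      push_neg at hc
      have : (a ::ₘ ν).esymm (j + 1) = 0 := by
        apply esymm_eq_zero_of_lt
        rw [Multiset.card_cons]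
        omega
      have := h (j + 1) (by omega) le_rfl
      linarith
    set t : ℕ → ℝ := fun i => (a ::ₘ ν).esymm i / ν.esymm (i - 1) with ht
    obtain ⟨l, hl, hmin⟩ := Finset.exists_min_image (Finset.Icc 1 j) t ⟨1, by
      simp [Finset.mem_Icc]; omega⟩
    rw [Finset.mem_Icc] at hl
    have hτpos : 0 < t l := div_pos (h l hl.1 (by omega)) (hslope l hl.1 hl.2)
    set μ' := (a - t l) ::ₘ ν with hμ'
    have hval : ∀ i, 1 ≤ i → μ'.esymm i = (a ::ₘ ν).esymm i - t l * ν.esymm (i - 1) := by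
      intro i h1
      rw [esymm_cons _ _ h1, esymm_cons _ _ h1]
      ring
    have hnn : ∀ i, 1 ≤ i → i < j + 1 → 0 ≤ μ'.esymm i := by
      intro i h1 h2
      rw [hval i h1]
      have hsl := hslope i h1 (by omega)
      have hmin' := hmin i (Finset.mem_Icc.mpr ⟨h1, by omega⟩)
      rw [ht] at hmin'
      have h4 := (le_div_iff₀ hsl).mp hmin'
      linarith
    have hpos' : 0 < μ'.esymm (j + 1) := by
      rw [hval (j + 1) (by omega)]
      have h3 := h (j + 1) (by omega) le_rfl
      have : j + 1 - 1 = j := by omega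
      rw [this]
      nlinarith
    have hzero : μ'.esymm l = 0 := by
      rw [hval l hl.1, ht]
      have hsl := (hslope l hl.1 hl.2).ne'
      field_simp
      ring
    have := esymm_pos_of_nonneg (by omega : 1 ≤ j + 1)
      (by rw [hμ', Multiset.card_cons]; omega) hnn hpos' l hl.1 (by omega)
    rw [hzero] at this
    exact lt_irrefl _ this

lemma qpoly_map_add (μ : Multiset ℝ) (ε : ℝ) :
    qpoly (μ.map (fun r => r + ε)) = (qpoly μ).comp (X + C ε) := by
  rw [qpoly, qpoly, Polynomial.multiset_prod_comp, Multiset.map_map, Multiset.map_map]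
  congr 1
  apply Multiset.map_congr rfl
  intro r _
  simp only [Function.comp_apply, Polynomial.add_comp, Polynomial.X_comp,
    Polynomial.C_comp, Polynomial.C_add]
  ring

lemma esymm_map_add_eq_eval (μ : Multiset ℝ) (ε : ℝ) {j : ℕ} (hj : j ≤ Multiset.card μ) :
    (μ.map (fun r => r + ε)).esymm j
      = (Polynomial.hasseDeriv (Multiset.card μ - j) (qpoly μ)).eval ε := by
  have hcard : Multiset.card (μ.map (fun r => r + ε)) = Multiset.card μ :=
    Multiset.card_map _ _
  have h1 := qpoly_coeff (μ.map (fun r => r + ε)) (j := Multiset.card μ - j)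
    (by rw [hcard]; omega)
  rw [hcard] at h1
  have h2 : Multiset.card μ - (Multiset.card μ - j) = j := by omega
  rw [h2] at h1
  rw [← h1, qpoly_map_add, ← Polynomial.taylor_apply, Polynomial.taylor_coeff]

/-- Shifting a multiset with nonnegative `e_1,…,e_m` by `ε > 0` makes them positive. -/
lemma esymm_shift_pos {μ : Multiset ℝ} {m : ℕ}
    (h : ∀ j, 1 ≤ j → j ≤ m → 0 ≤ μ.esymm j) {ε : ℝ} (hε : 0 < ε) :
    ∀ j, 1 ≤ j → j ≤ m → j ≤ Multiset.card μ → 0 < (μ.map (fun r => r + ε)).esymm j := by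
  intro j h1 hm hcard
  rw [esymm_map_add_eq_eval μ ε hcard]
  set d := Multiset.card μ - j with hd
  have hdeg : (Polynomial.hasseDeriv d (qpoly μ)).natDegree ≤ j := by
    refine (Polynomial.natDegree_hasseDeriv_le _ _).trans ?_
    rw [qpoly_natDegree]
    omega
  rw [Polynomial.eval_eq_sum_range' (Nat.lt_succ_of_le hdeg)]
  have hcoeffs : ∀ i, i ≤ j → (Polynomial.hasseDeriv d (qpoly μ)).coeff i
      = ((i + d).choose i : ℝ) * μ.esymm (j - i) := by
    intro i hi
    rw [Polynomial.hasseDeriv_coeff, qpoly_coeff μ (by omega)]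
    have e1 : Multiset.card μ - (i + d) = j - i := by omega
    have e2 : (i + d).choose d = (i + d).choose i := by
      rw [← Nat.choose_symm (by omega : i ≤ i + d)]
      congr 1
      omega
    rw [e1, e2]
  apply Finset.sum_pos'
  · intro i hi
    rw [Finset.mem_range] at hi
    rw [hcoeffs i (by omega)]
    apply mul_nonneg (mul_nonneg (by positivity) ?_) (by positivity)
    rcases Nat.eq_zero_or_pos (j - i) with h0 | h0
    · rw [h0, esymm_zero']; norm_num
    · exact h _ h0 (by omega)
  · refine ⟨j, Finset.mem_range.mpr (by omega), ?_⟩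
    rw [hcoeffs j le_rfl]
    have : j - j = 0 := by omega
    rw [this, esymm_zero', mul_one]
    have hch : 0 < ((j + d).choose j : ℝ) := by
      exact_mod_cast Nat.choose_pos (Nat.le_add_right j d)
    positivity

/-- Weak version: removing one entry preserves nonnegativity (with index drop). -/
lemma remove_one_weak {a : ℝ} {ν : Multiset ℝ} {m : ℕ}
    (h : ∀ j, 1 ≤ j → j ≤ m → 0 ≤ (a ::ₘ ν).esymm j) :
    ∀ j, 1 ≤ j → j + 1 ≤ m → 0 ≤ ν.esymm j := by
  intro j h1 hm
  rcases lt_or_ge (Multiset.card ν) j with hc | hc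
  · rw [esymm_eq_zero_of_lt hc]
  have key : ∀ ε : ℝ, 0 < ε → 0 < (ν.map (fun r => r + ε)).esymm j := by
    intro ε hε
    have hshift := esymm_shift_pos h hε
    rw [Multiset.map_cons] at hshift
    set K := min m (Multiset.card ν + 1) with hK
    have hstr : ∀ i, 1 ≤ i → i ≤ K → 0 < ((a + ε) ::ₘ ν.map (fun r => r + ε)).esymm i := by
      intro i hi1 hi2
      refine hshift i hi1 (by omega) ?_
      rw [Multiset.card_cons]
      omega
    exact remove_one_strict hstr j h1 (by omega)
  have hev : ∀ ε : ℝ, (ν.map (fun r => r + ε)).esymm j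
      = (Polynomial.hasseDeriv (Multiset.card ν - j) (qpoly ν)).eval ε :=
    fun ε => esymm_map_add_eq_eval ν ε hc
  have hcont : Filter.Tendsto
      (fun ε : ℝ => (Polynomial.hasseDeriv (Multiset.card ν - j) (qpoly ν)).eval ε)
      (nhdsWithin 0 (Set.Ioi 0)) (nhds ((Polynomial.hasseDeriv
        (Multiset.card ν - j) (qpoly ν)).eval 0)) :=
    ((Polynomial.hasseDeriv (Multiset.card ν - j) (qpoly ν)).continuous_aeval.tendsto
      0).mono_left nhdsWithin_le_nhds
  have hlim : 0 ≤ (Polynomial.hasseDeriv (Multiset.card ν - j) (qpoly ν)).eval 0 := by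
    refine ge_of_tendsto hcont ?_
    refine eventually_nhdsWithin_of_forall ?_
    intro ε hε
    rw [← hev ε]
    exact (key ε hε).le
  have h0 : ν.esymm j = (Polynomial.hasseDeriv (Multiset.card ν - j) (qpoly ν)).eval 0 := by
    have := hev 0
    simpa using this
  rw [h0]
  exact hlim

/-- Iterated weak removal. -/
lemma remove_many_weak (w : Multiset ℝ) : ∀ (ν : Multiset ℝ) (m : ℕ),
    (∀ j, 1 ≤ j → j ≤ m → 0 ≤ (ν + w).esymm j) →
    ∀ j, 1 ≤ j → j + Multiset.card w ≤ m → 0 ≤ ν.esymm j := by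
  induction w using Multiset.induction with
  | empty =>
    intro ν m h j h1 hm
    have := h j h1 (by simpa using hm)
    simpa using this
  | cons a w ih =>
    intro ν m h j h1 hm
    have hrw : ν + (a ::ₘ w) = a ::ₘ (ν + w) := by
      rw [Multiset.add_cons]
    rw [hrw] at h
    have h' := remove_one_weak h
    refine ih ν (m - 1) (fun i hi1 hi2 => h' i hi1 (by omega)) j h1 ?_
    rw [Multiset.card_cons] at hm
    omega

/-! ### Determinant expansion of `diagonal d + Q` -/

section MatrixPart

open Matrix

variable {R : Type*} [CommRing R] {n : ℕ}

lemma det_piecewise_single (S : Finset (Fin n)) (Q : Matrix (Fin n) (Fin n) R) :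
    Matrix.det (S.piecewise (fun i => Pi.single i (1:R)) Q)
      = Matrix.det (Q.submatrix (fun i : {x : Fin n // ¬ x ∈ S} => (i : Fin n))
          (fun i : {x : Fin n // ¬ x ∈ S} => (i : Fin n))) := by
  classical
  set M : Matrix (Fin n) (Fin n) R := S.piecewise (fun i => Pi.single i (1:R)) Q with hM
  let e : {x : Fin n // x ∈ S} ⊕ {x : Fin n // ¬ x ∈ S} ≃ Fin n :=
    Equiv.sumCompl (· ∈ S)
  rw [← Matrix.det_submatrix_equiv_self e M]
  have hblock : M.submatrix e e = Matrix.fromBlocks 1 0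
      (Q.submatrix (fun i : {x : Fin n // ¬ x ∈ S} => (i:Fin n))
        (fun i : {x : Fin n // x ∈ S} => (i:Fin n)))
      (Q.submatrix (fun i : {x : Fin n // ¬ x ∈ S} => (i:Fin n))
        (fun i : {x : Fin n // ¬ x ∈ S} => (i:Fin n))) := by
    ext i j
    rcases i with i | i <;> rcases j with j | j
    · have : M.submatrix e e (Sum.inl i) (Sum.inl j) = (Pi.single (i:Fin n) (1:R) : Fin n → R) (j:Fin n) := by
        show (S.piecewise (fun i => Pi.single i (1:R)) Q) (i : Fin n) (j : Fin n) = _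
        exact congrFun (Finset.piecewise_eq_of_mem _ _ _ i.2) _
      rw [this]
      rcases eq_or_ne i j with rfl | hne
      · simp [Pi.single_apply]
      · have hne' : (j : Fin n) ≠ (i : Fin n) := fun hh => hne (Subtype.ext hh).symm
        simp [Pi.single_apply, hne', Matrix.one_apply, hne, hne.symm]
    · have : M.submatrix e e (Sum.inl i) (Sum.inr j) = (Pi.single (i:Fin n) (1:R) : Fin n → R) (j:Fin n) := by
        show (S.piecewise (fun i => Pi.single i (1:R)) Q) (i : Fin n) (j : Fin n) = _
        exact congrFun (Finset.piecewise_eq_of_mem _ _ _ i.2) _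
      rw [this]
      have hne' : (j : Fin n) ≠ (i : Fin n) := by
        intro hh
        exact j.2 (hh ▸ i.2)
      simp [Pi.single_apply, hne']
    · show (S.piecewise (fun i => Pi.single i (1:R)) Q) (i : Fin n) (j : Fin n) = _
      exact (congrFun (Finset.piecewise_eq_of_notMem _ _ _ i.2) _).trans rfl
    · show (S.piecewise (fun i => Pi.single i (1:R)) Q) (i : Fin n) (j : Fin n) = _
      exact (congrFun (Finset.piecewise_eq_of_notMem _ _ _ i.2) _).trans rfl
  rw [hblock, Matrix.det_fromBlocks_zero₁₂, Matrix.det_one, one_mul]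

lemma det_diagonal_add (d : Fin n → R) (Q : Matrix (Fin n) (Fin n) R) :
    Matrix.det (Matrix.diagonal d + Q)
      = ∑ S : Finset (Fin n), (∏ i ∈ S, d i) *
          Matrix.det (Q.submatrix (fun i : {x : Fin n // ¬ x ∈ S} => (i : Fin n))
            (fun i : {x : Fin n // ¬ x ∈ S} => (i : Fin n))) := by
  classical
  have hdet : ∀ (M : Matrix (Fin n) (Fin n) R),
      M.det = (Matrix.detRowAlternating (R := R) (n := Fin n)).toMultilinearMap M := fun _ => rfl
  rw [hdet]
  have hadd : (Matrix.diagonal d + Q : Matrix (Fin n) (Fin n) R)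
      = ((Matrix.diagonal d : Fin n → Fin n → R) + (Q : Fin n → Fin n → R) : Fin n → Fin n → R) := rfl
  rw [hadd]
  refine ((Matrix.detRowAlternating (R := R) (n := Fin n)).toMultilinearMap.map_add_univ
    (Matrix.diagonal d) Q).trans ?_
  apply Finset.sum_congr rfl
  intro S _
  have hrow : S.piecewise (Matrix.diagonal d : Matrix (Fin n) (Fin n) R) Q
      = S.piecewise (fun i => d i • (S.piecewise (fun i' => Pi.single i' (1:R)) Q) i)
          (S.piecewise (fun i' => Pi.single i' (1:R)) Q) := by
    ext i j
    by_cases hi : i ∈ S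
    · refine (congrFun (Finset.piecewise_eq_of_mem _ _ _ hi) j).trans ?_
      refine Eq.trans ?_ (congrFun (Finset.piecewise_eq_of_mem S
        (fun i => d i • (S.piecewise (fun i' => Pi.single i' (1:R)) Q) i)
        (S.piecewise (fun i' => Pi.single i' (1:R)) Q) hi) j).symm
      have : (S.piecewise (fun i' => Pi.single i' (1:R)) Q) i = Pi.single i (1:R) :=
        Finset.piecewise_eq_of_mem _ _ _ hi
      rw [this]
      rcases eq_or_ne i j with rfl | hne
      · simp [Matrix.diagonal_apply, Pi.single_apply]
      · simp [Matrix.diagonal_apply, Pi.single_apply, hne, Ne.symm hne]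
    · have h1 := Finset.piecewise_eq_of_notMem S (Matrix.diagonal d : Matrix (Fin n) (Fin n) R) Q hi
      have h2 := Finset.piecewise_eq_of_notMem S (fun i' => Pi.single i' (1:R)) Q hi
      have h3 := Finset.piecewise_eq_of_notMem S
        (fun i => d i • (S.piecewise (fun i' => Pi.single i' (1:R)) Q) i)
        (S.piecewise (fun i' => Pi.single i' (1:R)) Q) hi
      exact congrFun (h1.trans (h3.trans h2).symm) j
  rw [hrow, MultilinearMap.map_piecewise_smul, smul_eq_mul]
  congr 1
  exact ((hdet _).symm).trans (det_piecewise_single S Q)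

end MatrixPart

/-! ### The reverse characteristic polynomial `det (X • 1 + M)` -/

section ComplexSide

open Matrix Polynomial

variable {n : ℕ}

/-- `det (X·I + M)` as a polynomial; its roots are the negated eigenvalues. -/
def cp (M : Matrix (Fin n) (Fin n) ℂ) : Polynomial ℂ :=
  Matrix.det (Matrix.diagonal (fun _ : Fin n => (X : Polynomial ℂ)) + M.map Polynomial.C)

lemma cp_unitary_conj (U : Matrix.unitaryGroup (Fin n) ℂ) (N : Matrix (Fin n) (Fin n) ℂ) :
    cp ((U : Matrix (Fin n) (Fin n) ℂ) * N * star (U : Matrix (Fin n) (Fin n) ℂ)) = cp N := by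
  set Um : Matrix (Fin n) (Fin n) ℂ := (U : Matrix (Fin n) (Fin n) ℂ) with hUm
  have hUU : Um * star Um = 1 := Matrix.mem_unitaryGroup_iff.mp U.2
  unfold cp
  have hX : Matrix.diagonal (fun _ : Fin n => (X : Polynomial ℂ))
      = (X : Polynomial ℂ) • (1 : Matrix (Fin n) (Fin n) (Polynomial ℂ)) := by
    ext i j
    by_cases h : i = j <;>
      simp [Matrix.diagonal_apply, Matrix.one_apply, h]
  have hfact : Matrix.diagonal (fun _ : Fin n => (X : Polynomial ℂ))
        + (Um * N * star Um).map Polynomial.C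
      = Um.map Polynomial.C *
          (Matrix.diagonal (fun _ : Fin n => (X : Polynomial ℂ)) + N.map Polynomial.C) *
          (star Um).map Polynomial.C := by
    rw [Matrix.mul_add, Matrix.add_mul]
    congr 1
    · rw [hX, Matrix.mul_smul, Matrix.smul_mul, mul_one, ← Matrix.map_mul, hUU,
        Matrix.map_one _ (map_zero _) (map_one _)]
    · rw [← Matrix.map_mul, ← Matrix.map_mul]
  rw [hfact, Matrix.det_mul, Matrix.det_mul, mul_right_comm, ← Matrix.det_mul,
    ← Matrix.map_mul, hUU, Matrix.map_one _ (map_zero _) (map_one _), Matrix.det_one, one_mul]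

lemma cp_hermitian {M : Matrix (Fin n) (Fin n) ℂ} (hM : M.IsHermitian) :
    cp M = ∏ i : Fin n, (X + C ((hM.eigenvalues i : ℝ) : ℂ)) := by
  have h1 : cp M = cp (Matrix.diagonal (RCLike.ofReal ∘ hM.eigenvalues)) := by
    conv_lhs => rw [hM.spectral_theorem]
    exact cp_unitary_conj _ _
  rw [h1]
  unfold cp
  rw [Matrix.diagonal_map (map_zero _), Matrix.diagonal_add, Matrix.det_diagonal]
  apply Finset.prod_congr rfl
  intro i _
  norm_num [Function.comp]

/-- Cast of the real elementary symmetric function. -/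
lemma esymm_cast (k : ℕ) (f : Fin n → ℝ) :
    ((esymm n k f : ℝ) : ℂ) = ∑ t ∈ Finset.univ.powersetCard k, ∏ i ∈ t, (f i : ℂ) := by
  unfold _root_.esymm
  push_cast
  rfl

/-- Main step: adding a PSD matrix to a Hermitian matrix whose eigenvalues
satisfy `σ_1,…,σ_m ≥ 0` increases each `σ_j(λ(·))`, `j ≤ m`. -/
lemma sigmaEigen_le_add_psd {m : ℕ} (hmn : m ≤ n)
    {M P : Matrix (Fin n) (Fin n) ℂ} (hM : M.IsHermitian) (hP : P.PosSemidef)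
    (hgood : ∀ l, 1 ≤ l → l ≤ m → 0 ≤ esymm n l hM.eigenvalues) :
    ∀ j, 1 ≤ j → j ≤ m → sigmaEigen n j M ≤ sigmaEigen n j (M + P) := by
  classical
  intro j hj1 hjm
  set lam := hM.eigenvalues with hlam
  set Um : Matrix (Fin n) (Fin n) ℂ := (hM.eigenvectorUnitary : Matrix (Fin n) (Fin n) ℂ)
    with hUm
  have hUU : Um * star Um = 1 := Matrix.mem_unitaryGroup_iff.mp hM.eigenvectorUnitary.2
  set Q : Matrix (Fin n) (Fin n) ℂ := star Um * P * Um with hQ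
  have hQpsd : Q.PosSemidef := by
    have h := hP.conjTranspose_mul_mul_same (B := Um)
    exact h
  have hMP : (M + P).IsHermitian := hM.add hP.1
  set D : Matrix (Fin n) (Fin n) ℂ := Matrix.diagonal (RCLike.ofReal ∘ lam) with hD
  have hPU : P = Um * Q * star Um := by
    rw [hQ]
    calc P = (Um * star Um) * P * (Um * star Um) := by rw [hUU, one_mul, mul_one]
    _ = Um * (star Um * P * Um) * star Um := by simp only [mul_assoc]
  have hMPkey : cp (M + P) = cp (D + Q) := by
    have h1 : M + P = Um * (D + Q) * star Um := by
      rw [Matrix.mul_add, Matrix.add_mul]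
      rw [← hPU]
      congr 1
      exact hM.spectral_theorem
    rw [h1]
    exact cp_unitary_conj hM.eigenvectorUnitary (D + Q)
  -- expansion of `cp (D + Q)`
  have hexp : cp (D + Q)
      = ∑ S : Finset (Fin n), (∏ i ∈ S, (X + C ((lam i : ℝ) : ℂ))) *
          C (Matrix.det (Q.submatrix (fun i : {x : Fin n // ¬ x ∈ S} => (i : Fin n))
            (fun i : {x : Fin n // ¬ x ∈ S} => (i : Fin n)))) := by
    unfold cp
    have h2 : Matrix.diagonal (fun _ : Fin n => (X : Polynomial ℂ)) + (D + Q).map C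
        = Matrix.diagonal (fun i : Fin n => X + C ((lam i : ℝ) : ℂ)) + Q.map C := by
      rw [Matrix.map_add, hD, Matrix.diagonal_map (map_zero _), ← add_assoc,
        Matrix.diagonal_add]
      · congr 1
      · exact fun a₁ a₂ => map_add C a₁ a₂
    rw [h2, det_diagonal_add]
    apply Finset.sum_congr rfl
    intro S _
    congr 1
    rw [Matrix.submatrix_map, ← RingHom.mapMatrix_apply, ← RingHom.map_det]
  -- real values of each summand's coefficient at `n - j`
  have hterm : ∀ S : Finset (Fin n), ∃ c : ℝ, 0 ≤ c ∧
      ((∏ i ∈ S, (X + C ((lam i : ℝ) : ℂ))) *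
        C (Matrix.det (Q.submatrix (fun i : {x : Fin n // ¬ x ∈ S} => (i : Fin n))
          (fun i : {x : Fin n // ¬ x ∈ S} => (i : Fin n))))).coeff (n - j) = (c : ℂ) := by
    intro S
    -- the determinant is a nonnegative real
    have hsub : (Q.submatrix (fun i : {x : Fin n // ¬ x ∈ S} => (i : Fin n))
        (fun i : {x : Fin n // ¬ x ∈ S} => (i : Fin n))).PosSemidef := hQpsd.submatrix _
    set r : ℝ := ∏ i, hsub.1.eigenvalues i with hr
    have hrnn : 0 ≤ r := Finset.prod_nonneg fun i _ => hsub.eigenvalues_nonneg i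
    have hdet : Matrix.det (Q.submatrix (fun i : {x : Fin n // ¬ x ∈ S} => (i : Fin n))
        (fun i : {x : Fin n // ¬ x ∈ S} => (i : Fin n))) = (r : ℂ) := by
      rw [hsub.1.det_eq_prod_eigenvalues, hr]
      push_cast
      rfl
    rw [Polynomial.coeff_mul_C, hdet]
    -- now handle the coefficient of the product of linear factors
    rcases le_or_gt (n - j) S.card with hc | hc
    · refine ⟨(∑ t ∈ S.powersetCard (S.card - (n - j)), ∏ i ∈ t, lam i) * r,
        mul_nonneg ?_ hrnn, ?_⟩
      · -- nonnegativity via iterated removal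
        have hmem : (S.val.map lam) ≤ (Finset.univ.val.map lam) :=
          Multiset.map_le_map (Finset.val_le_iff.mpr (Finset.subset_univ S))
        obtain ⟨w, hw⟩ := Multiset.le_iff_exists_add.mp hmem
        have hes : (∑ t ∈ S.powersetCard (S.card - (n - j)), ∏ i ∈ t, lam i)
            = (S.val.map lam).esymm (S.card - (n - j)) := (Finset.esymm_map_val lam S _).symm
        rw [hes]
        rcases Nat.eq_zero_or_pos (S.card - (n - j)) with h0 | h0
        · rw [h0, esymm_zero']
          norm_num
        · have hgood' : ∀ i, 1 ≤ i → i ≤ m → 0 ≤ (Finset.univ.val.map lam).esymm i := by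
            intro i h1 h2
            have := hgood i h1 h2
            rwa [show esymm n i lam = (Finset.univ.val.map lam).esymm i from
              (Finset.esymm_map_val lam Finset.univ i).symm] at this
          rw [hw] at hgood'
          refine remove_many_weak w (S.val.map lam) m hgood' _ h0 ?_
          have hcw : Multiset.card w = n - S.card := by
            have hcval : Multiset.card (S.val.map lam) = S.card := by
              rw [Multiset.card_map]; rfl
            have htot : Multiset.card (Finset.univ.val.map lam) = n := by
              rw [Multiset.card_map]
              simp
            have := congrArg Multiset.card hw
            rw [Multiset.card_add, hcval] at this
            omega
          have hSn : S.card ≤ n := by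
            have := Finset.card_le_card (Finset.subset_univ S)
            simpa using this
          omega
      · rw [Finset.prod_X_add_C_coeff S _ hc]
        push_cast
        rfl
    · refine ⟨0, le_rfl, ?_⟩
      have hdeg : (∏ i ∈ S, (X + C ((lam i : ℝ) : ℂ))).natDegree < n - j := by
        have := Polynomial.natDegree_prod (s := S) (f := fun i => (X + C ((lam i : ℝ) : ℂ)))
          (fun i _ => Polynomial.X_add_C_ne_zero _)
        rw [this]
        simp only [Polynomial.natDegree_X_add_C]
        simpa using hc
      rw [Polynomial.coeff_eq_zero_of_natDegree_lt hdeg]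
      simp
  -- value of the `S = univ` term
  have huniv : ((∏ i ∈ (Finset.univ : Finset (Fin n)), (X + C ((lam i : ℝ) : ℂ))) *
      C (Matrix.det (Q.submatrix
        (fun i : {x : Fin n // ¬ x ∈ (Finset.univ : Finset (Fin n))} => (i : Fin n))
        (fun i : {x : Fin n // ¬ x ∈ (Finset.univ : Finset (Fin n))} => (i : Fin n))))).coeff (n - j)
      = ((esymm n j lam : ℝ) : ℂ) := by
    haveI : IsEmpty {x : Fin n // ¬ x ∈ (Finset.univ : Finset (Fin n))} :=
      ⟨fun x => x.2 (Finset.mem_univ x.1)⟩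
    rw [Matrix.det_isEmpty, Polynomial.C_1, mul_one]
    have hcard : n - j ≤ (Finset.univ : Finset (Fin n)).card := by simp
    rw [Finset.prod_X_add_C_coeff _ _ hcard, esymm_cast]
    have : (Finset.univ : Finset (Fin n)).card - (n - j) = j := by
      simp only [Finset.card_univ, Fintype.card_fin]
      omega
    rw [this]
  -- put everything together
  choose c hcnn hc using hterm
  have hcuniv : (c Finset.univ : ℂ) = ((esymm n j lam : ℝ) : ℂ) := by
    rw [← hc Finset.univ, huniv]
  have hsum : ((esymm n j hMP.eigenvalues : ℝ) : ℂ) = ((∑ S : Finset (Fin n), c S : ℝ) : ℂ) := by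
    have hL : cp (M + P) = ∏ i : Fin n, (X + C ((hMP.eigenvalues i : ℝ) : ℂ)) :=
      cp_hermitian hMP
    have hcoeff := congrArg (fun p => Polynomial.coeff p (n - j)) (hL.symm.trans
      (hMPkey.trans hexp))
    rw [Polynomial.finset_sum_coeff] at hcoeff
    have hcard : n - j ≤ (Finset.univ : Finset (Fin n)).card := by simp
    rw [Finset.prod_X_add_C_coeff _ _ hcard] at hcoeff
    have hjj : (Finset.univ : Finset (Fin n)).card - (n - j) = j := by
      simp only [Finset.card_univ, Fintype.card_fin]
      omega
    rw [hjj] at hcoeff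
    rw [esymm_cast]
    rw [hcoeff]
    push_cast
    apply Finset.sum_congr rfl
    intro S _
    rw [hc S]
  have hreal : esymm n j hMP.eigenvalues = ∑ S : Finset (Fin n), c S :=
    Complex.ofReal_injective hsum
  have hineq : esymm n j lam ≤ esymm n j hMP.eigenvalues := by
    rw [hreal]
    have := Finset.single_le_sum (f := c) (fun S _ => hcnn S) (Finset.mem_univ Finset.univ)
    have hcu : c Finset.univ = esymm n j lam := Complex.ofReal_injective hcuniv
    linarith
  rw [show sigmaEigen n j M = esymm n j lam from dif_pos hM,
    show sigmaEigen n j (M + P) = esymm n j hMP.eigenvalues from dif_pos hMP]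
  exact hineq

end ComplexSide

end SigmaAux

open SigmaAux Matrix

/-- If `λ(A) ∈ Γ̄_m` and `B` is positive semidefinite, then `t ↦ F_m(A + tB)` is
nondecreasing on `[0, ∞)`. -/
theorem sigmaEigen_monotone_add_posSemidef
    (n m : ℕ) (hm : 1 ≤ m) (hmn : m ≤ n)
    (A B : Matrix (Fin n) (Fin n) ℂ)
    (hA : A.IsHermitian)
    (hAg : hA.eigenvalues ∈ closure (gardingCone n m))
    (hB : B.PosSemidef) :
    MonotoneOn (fun t : ℝ => sigmaEigen n m (A + t • B)) (Set.Ici 0) := by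
  classical
  -- real scalar multiples of `B` are Hermitian / PSD
  have hsmul : ∀ t : ℝ, (t • B).IsHermitian := by
    intro t
    have h1 : (t • B)ᴴ = t • Bᴴ := by
      ext i j
      simp [Matrix.conjTranspose_apply, star_smul]
    rw [Matrix.IsHermitian, h1, hB.1.eq]
  have hpsd : ∀ t : ℝ, 0 ≤ t → (t • B).PosSemidef := by
    intro t ht
    exact hB.smul ht
  -- goodness of A
  have hgoodA : ∀ l, 1 ≤ l → l ≤ m → 0 ≤ esymm n l hA.eigenvalues := by
    intro l h1 h2
    have hcont : Continuous (fun lam : Fin n → ℝ => esymm n l lam) := by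
      unfold esymm
      exact continuous_finset_sum _ fun s _ =>
        continuous_finset_prod _ fun i _ => continuous_apply i
    have hsub : closure (gardingCone n m) ⊆ {lam | 0 ≤ esymm n l lam} := by
      apply closure_minimal
      · intro lam hlam
        exact (hlam l h1 h2).le
      · exact isClosed_le continuous_const hcont
    exact hsub hAg
  intro s hs t ht hst
  simp only
  have hsB := hpsd s hs
  have hAs : (A + s • B).IsHermitian := hA.add (hsmul s)
  have step1 := sigmaEigen_le_add_psd hmn hA hsB hgoodA
  have hgoodAs : ∀ l, 1 ≤ l → l ≤ m → 0 ≤ esymm n l hAs.eigenvalues := by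
    intro l h1 h2
    have h3 := step1 l h1 h2
    have e1 : sigmaEigen n l A = esymm n l hA.eigenvalues := dif_pos hA
    have e2 : sigmaEigen n l (A + s • B) = esymm n l hAs.eigenvalues := dif_pos hAs
    rw [e1] at h3
    rw [e2] at h3
    have h4 := hgoodA l h1 h2
    linarith
  have step2 := sigmaEigen_le_add_psd hmn hAs (hpsd (t - s) (by linarith [hs, hst] ))
    hgoodAs m hm le_rfl
  have hrw : (A + s • B) + (t - s) • B = A + t • B := by
    rw [add_assoc, ← add_smul]
    congr 2
    ring
  rw [hrw] at step2
  have step1m := step1 m hm le_rfl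
  -- combine
  calc sigmaEigen n m (A + s • B) ≤ sigmaEigen n m (A + t • B) := step2
end
end

section
/- There exists a constant c(n) > 0 depending only on n with the following property. Let c₀, c > 0 and let v : ℂⁿ → ℝ be differentiable with ‖∇v(z)‖ ≤ c₀ for every z. Let a, b ∈ ℂ with a ≠ b and z₀' ∈ ℂ^{n−1}, and suppose v(a, z₀') > v(b, z₀') + 2c. Set δ = c/(4c₀) and let E = {(z₁, z') ∈ ℂ × ℂ^{n−1} : dist(z₁, [a,b]) ≤ δ and ‖z' − z₀'‖ ≤ δ}, where [a,b] is the segment in ℂ joining a and b. Then ∫_E |∂v/∂z₁|² dV ≥ c(n) δ^{2n−1} c² / |a − b|. -/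
open MeasureTheory Metric

noncomputable section

/-- The Wirtinger derivative `∂v/∂z₁ = ½(∂v/∂x₁ − i ∂v/∂y₁)` of a real-valued function on
`ℂ × ℂ^{n-1}`, in the first complex coordinate. -/
def wirtingerFst {k : ℕ} (v : ℂ × EuclideanSpace ℂ (Fin k) → ℝ)
    (z : ℂ × EuclideanSpace ℂ (Fin k)) : ℂ :=
  (((fderiv ℝ v z ((1 : ℂ), 0) : ℝ) : ℂ)
    - Complex.I * ((fderiv ℝ v z ((Complex.I : ℂ), 0) : ℝ) : ℂ)) / 2

/-- Cauchy–Schwarz by expansion. -/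
lemma sq_integral_le {μ : Measure ℝ} [IsFiniteMeasure μ] {g : ℝ → ℝ}
    (hg : Integrable g μ) (hg2 : Integrable (fun x => g x ^ 2) μ) :
    (∫ x, g x ∂μ) ^ 2 ≤ (μ Set.univ).toReal * ∫ x, g x ^ 2 ∂μ := by
  set M : ℝ := (μ Set.univ).toReal with hM
  set I : ℝ := ∫ x, g x ∂μ with hI
  rcases eq_or_lt_of_le (show (0:ℝ) ≤ M from ENNReal.toReal_nonneg) with h0 | h0
  · have hμ : μ = 0 := by
      have := (ENNReal.toReal_eq_zero_iff _).1 h0.symm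
      rcases this with h | h
      · exact Measure.measure_univ_eq_zero.mp h
      · exact absurd h (measure_ne_top μ _)
    simp [hI, hμ]
  · have key : 0 ≤ ∫ x, (M * g x - I) ^ 2 ∂μ :=
      integral_nonneg fun x => sq_nonneg _
    have expand : ∫ x, (M * g x - I) ^ 2 ∂μ
        = M ^ 2 * (∫ x, g x ^ 2 ∂μ) - M * I ^ 2 := by
      have h1 : ∀ x, (M * g x - I) ^ 2
          = M ^ 2 * g x ^ 2 - (2 * M * I) * g x + I ^ 2 := by intro x; ring
      simp_rw [h1]
      rw [integral_add, integral_sub, integral_const_mul, integral_const_mul,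
        integral_const]
      · simp only [smul_eq_mul, measureReal_def, ← hM, ← hI]; ring
      · exact hg2.const_mul _
      · exact hg.const_mul _
      · exact (hg2.const_mul _).sub (hg.const_mul _)
      · exact integrable_const _
    nlinarith [key, expand]

/-- Pointwise Wirtinger estimate: the square of the directional derivative in any unit complex
direction of the first coordinate is at most `4 |∂v/∂z₁|²`. -/
lemma wirtinger_pointwise {k : ℕ} (v : ℂ × EuclideanSpace ℂ (Fin k) → ℝ)
    (p : ℂ × EuclideanSpace ℂ (Fin k)) (u : ℂ) (hu : ‖u‖ = 1) :
    (fderiv ℝ v p ((u : ℂ), 0)) ^ 2 ≤ 4 * ‖wirtingerFst v p‖ ^ 2 := by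
  set D := fderiv ℝ v p
  set X := D ((1:ℂ), 0) with hX
  set Y := D ((Complex.I : ℂ), 0) with hY
  have hsplit : ((u : ℂ), (0 : EuclideanSpace ℂ (Fin k)))
      = u.re • ((1:ℂ), (0 : EuclideanSpace ℂ (Fin k)))
        + u.im • ((Complex.I : ℂ), 0) := by
    simp only [Prod.smul_mk, Prod.mk_add_mk, Prod.mk.injEq, smul_zero, add_zero,
      Complex.real_smul, mul_one, and_true]
    rw [mul_comm]
    rw [mul_comm Complex.I]
    exact (Complex.re_add_im u).symm
  have hDu : D ((u : ℂ), 0) = u.re * X + u.im * Y := by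
    rw [hsplit]
    simp only [map_add, ContinuousLinearMap.map_smul, smul_eq_mul]
    rfl
  have hnorm : ‖wirtingerFst v p‖ ^ 2 = (X ^ 2 + Y ^ 2) / 4 := by
    have h1 : ‖wirtingerFst v p‖ ^ 2 = Complex.normSq (wirtingerFst v p) := by
      rw [Complex.sq_norm]
    rw [h1, wirtingerFst, map_div₀]
    simp only [Complex.normSq_apply, Complex.sub_re, Complex.sub_im, Complex.mul_re,
      Complex.mul_im, Complex.I_re, Complex.I_im, Complex.ofReal_re, Complex.ofReal_im,
      Complex.normSq_apply]
    have h2 : Complex.re 2 = 2 := by norm_num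
    have h3 : Complex.im 2 = 0 := by norm_num
    rw [h2, h3, ← hX, ← hY]
    ring
  have huu : u.re ^ 2 + u.im ^ 2 = 1 := by
    have h2 : Complex.normSq u = 1 := by
      rw [← Complex.sq_norm, hu]; norm_num
    rw [Complex.normSq_apply] at h2; nlinarith [h2]
  rw [hDu, hnorm]
  nlinarith [sq_nonneg (u.re * Y - u.im * X), sq_nonneg X, sq_nonneg Y]

/-- The affine map `w ↦ a + u*w` of `ℂ` as a homeomorphism (`u ≠ 0`). -/
def rotTrans (a u : ℂ) (hu0 : u ≠ 0) : ℂ ≃ₜ ℂ :=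
  (Homeomorph.mulLeft₀ u hu0).trans (Homeomorph.addLeft a)

lemma rotTrans_apply (a u : ℂ) (hu0 : u ≠ 0) (w : ℂ) :
    rotTrans a u hu0 w = a + u * w := rfl

/-- The parametrization `((s, z'), t) ↦ (a + u (t + s i), z')` as a measurable equivalence. -/
def shear (k : ℕ) (a u : ℂ) (hu0 : u ≠ 0) :
    ((ℝ × EuclideanSpace ℂ (Fin k)) × ℝ) ≃ᵐ (ℂ × EuclideanSpace ℂ (Fin k)) :=
  (MeasurableEquiv.prodComm.trans MeasurableEquiv.prodAssoc.symm).trans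
    (MeasurableEquiv.prodCongr
      (Complex.measurableEquivRealProd.symm.trans (rotTrans a u hu0).toMeasurableEquiv)
      (MeasurableEquiv.refl _))

lemma shear_apply (k : ℕ) (a u : ℂ) (hu0 : u ≠ 0)
    (s t : ℝ) (z' : EuclideanSpace ℂ (Fin k)) :
    shear k a u hu0 ((s, z'), t) = (a + u * (↑t + ↑s * Complex.I), z') := by
  show (rotTrans a u hu0 (Complex.measurableEquivRealProd.symm (t, s)), z') = _
  rw [Prod.mk.injEq]
  refine ⟨?_, rfl⟩
  rw [rotTrans_apply]
  congr 1
  have h : Complex.measurableEquivRealProd.symm (t, s) = Complex.mk t s := rfl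
  rw [h, Complex.mk_eq_add_mul_I]

lemma shear_measurePreserving (k : ℕ) (a u : ℂ) (hu0 : u ≠ 0) (hu : ‖u‖ = 1) :
    MeasurePreserving (shear k a u hu0) volume volume := by
  have hrot : MeasurePreserving (fun w : ℂ => a + u * w) volume volume := by
    have h1 : MeasurePreserving
        (rotation (⟨u, by simpa [Submonoid.unitSphere] using hu⟩ : Circle)) volume volume :=
      LinearIsometryEquiv.measurePreserving _
    have h2 : MeasurePreserving (fun w : ℂ => a + w) volume volume :=
      measurePreserving_add_left volume a
    have := h2.comp h1
    have heq : ((fun w : ℂ => a + w)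
          ∘ (rotation (⟨u, by simpa [Submonoid.unitSphere] using hu⟩ : Circle)))
        = fun w : ℂ => a + u * w := by
      funext w; exact congrArg (a + ·) (rotation_apply _ w)
    rwa [heq] at this
  have h3 : MeasurePreserving (Complex.measurableEquivRealProd.symm) volume volume :=
    Complex.volume_preserving_equiv_real_prod.symm _
  have h4 : MeasurePreserving
      (fun p : ℝ × ℝ => (rotTrans a u hu0) (Complex.measurableEquivRealProd.symm p))
      volume volume := hrot.comp h3
  have h5 : MeasurePreserving (Prod.map
      (fun p : ℝ × ℝ => (rotTrans a u hu0) (Complex.measurableEquivRealProd.symm p))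
      (id : EuclideanSpace ℂ (Fin k) → _)) volume volume :=
    h4.prod (MeasurePreserving.id _)
  have h6 : MeasurePreserving (Prod.swap :
      (ℝ × EuclideanSpace ℂ (Fin k)) × ℝ → ℝ × (ℝ × EuclideanSpace ℂ (Fin k)))
      volume volume := Measure.measurePreserving_swap
  have h7 : MeasurePreserving (MeasurableEquiv.prodAssoc.symm :
      ℝ × (ℝ × EuclideanSpace ℂ (Fin k)) ≃ᵐ _) volume volume :=
    (measurePreserving_prodAssoc volume volume volume).symm _
  have hcomp := (h5.comp h7).comp h6
  have heq : ⇑(shear k a u hu0) = (Prod.map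
      (fun p : ℝ × ℝ => (rotTrans a u hu0) (Complex.measurableEquivRealProd.symm p))
      (id : EuclideanSpace ℂ (Fin k) → _))
      ∘ (⇑(MeasurableEquiv.prodAssoc.symm) ∘ Prod.swap) := by
    funext y
    rfl
  rwa [heq]

set_option maxHeartbeats 2000000 in
/-- The key integral lower bound in the Liouville proof: if `‖∇v‖ ≤ c₀` everywhere and
`v(a,z₀') > v(b,z₀') + 2c`, then with `δ = c/(4c₀)` the integral of `|∂v/∂z₁|²` over the
`δ`-neighborhood `E` of `[a,b] × {z₀'}` is at least `c(n)·δ^{2n-1}·c²/|a−b|`. -/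
theorem integral_wirtinger_sq_lower_bound
    (n : ℕ) (hn : 1 ≤ n) :
    ∃ C : ℝ, 0 < C ∧
      ∀ (c₀ c : ℝ), 0 < c₀ → 0 < c →
        ∀ v : ℂ × EuclideanSpace ℂ (Fin (n - 1)) → ℝ,
          Differentiable ℝ v →
          (∀ z, ‖fderiv ℝ v z‖ ≤ c₀) →
          ∀ (a b : ℂ) (z₀' : EuclideanSpace ℂ (Fin (n - 1))),
            a ≠ b →
            v (b, z₀') + 2 * c < v (a, z₀') →
            C * (c / (4 * c₀)) ^ (2 * n - 1) * c ^ 2 / dist a b ≤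
              ∫ z in {z : ℂ × EuclideanSpace ℂ (Fin (n - 1)) |
                  infDist z.1 (segment ℝ a b) ≤ c / (4 * c₀) ∧
                    ‖z.2 - z₀'‖ ≤ c / (4 * c₀)},
                ‖wirtingerFst v z‖ ^ 2 := by
  have hvolB_pos : 0 < volume (ball (0 : EuclideanSpace ℂ (Fin (n - 1))) 1) :=
    measure_ball_pos _ _ one_pos
  have hvolB_fin : volume (ball (0 : EuclideanSpace ℂ (Fin (n - 1))) 1) < ⊤ :=
    measure_ball_lt_top
  set VB : ℝ := (volume (ball (0 : EuclideanSpace ℂ (Fin (n - 1))) 1)).toReal with hVB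
  have hVBpos : 0 < VB := ENNReal.toReal_pos hvolB_pos.ne' hvolB_fin.ne
  refine ⟨VB / 2, by linarith, ?_⟩
  intro c₀ c hc₀ hc v hv hvb a b z₀' hab hgap
  set δ := c / (4 * c₀) with hδdef
  have hδ : 0 < δ := by positivity
  have hL : 0 < dist a b := dist_pos.mpr hab
  set L := dist a b with hLdef
  have hLC : (L : ℂ) ≠ 0 := by exact_mod_cast hL.ne'
  set u : ℂ := (b - a) / (L : ℂ) with hudef
  have hu : ‖u‖ = 1 := by
    rw [hudef, norm_div]
    have h1 : ‖b - a‖ = L := by rw [hLdef, dist_eq_norm, norm_sub_rev]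
    have h2 : ‖(L : ℂ)‖ = L := by
      rw [Complex.norm_real, Real.norm_eq_abs, abs_of_pos hL]
    rw [h1, h2, div_self hL.ne']
  have hu0 : u ≠ 0 := by
    intro h; rw [h, norm_zero] at hu; exact one_ne_zero hu.symm
  set Φ := shear (n - 1) a u hu0 with hΦdef
  set F := fun z : ℂ × EuclideanSpace ℂ (Fin (n - 1)) => ‖wirtingerFst v z‖ ^ 2 with hFdef
  set E := {z : ℂ × EuclideanSpace ℂ (Fin (n - 1)) |
      infDist z.1 (segment ℝ a b) ≤ δ ∧ ‖z.2 - z₀'‖ ≤ δ} with hEdef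
  set A := Set.Icc (-δ) δ ×ˢ closedBall z₀' δ with hAdef
  set B := Set.Icc (0:ℝ) L with hBdef
  -- Lipschitz bound
  have hlip : ∀ p q : ℂ × EuclideanSpace ℂ (Fin (n - 1)), |v p - v q| ≤ c₀ * ‖p - q‖ := by
    intro p q
    have := Convex.norm_image_sub_le_of_norm_fderiv_le
      (fun x _ => (hv x)) (fun x _ => hvb x) convex_univ (Set.mem_univ q) (Set.mem_univ p)
    simpa [Real.norm_eq_abs] using this
  -- measurability and boundedness of F
  have hWmeas : Measurable (wirtingerFst v) := by
    have hX := measurable_fderiv_apply_const ℝ v ((1:ℂ), (0 : EuclideanSpace ℂ (Fin (n - 1))))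
    have hY := measurable_fderiv_apply_const ℝ v
      ((Complex.I : ℂ), (0 : EuclideanSpace ℂ (Fin (n - 1))))
    exact ((Complex.measurable_ofReal.comp hX).sub
      ((Complex.measurable_ofReal.comp hY).const_mul Complex.I)).div_const 2
  have hFmeas : Measurable F := (hWmeas.norm.pow_const 2)
  have hWbd : ∀ z, ‖wirtingerFst v z‖ ≤ c₀ := by
    intro z
    set X := (fderiv ℝ v z) ((1:ℂ), (0 : EuclideanSpace ℂ (Fin (n - 1)))) with hXd
    set Y := (fderiv ℝ v z) ((Complex.I:ℂ), (0 : EuclideanSpace ℂ (Fin (n - 1)))) with hYd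
    have h1 : ‖X‖ ≤ c₀ := by
      calc ‖X‖ ≤ ‖fderiv ℝ v z‖ * ‖((1:ℂ), (0 : EuclideanSpace ℂ (Fin (n - 1))))‖ :=
            (fderiv ℝ v z).le_opNorm _
        _ ≤ c₀ * 1 := by
            apply mul_le_mul (hvb z) _ (norm_nonneg _) (le_trans (norm_nonneg _) (hvb z))
            simp [Prod.norm_def]
        _ = c₀ := mul_one _
    have h2 : ‖Y‖ ≤ c₀ := by
      calc ‖Y‖ ≤ ‖fderiv ℝ v z‖ * ‖((Complex.I:ℂ), (0 : EuclideanSpace ℂ (Fin (n - 1))))‖ :=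
            (fderiv ℝ v z).le_opNorm _
        _ ≤ c₀ * 1 := by
            apply mul_le_mul (hvb z) _ (norm_nonneg _) (le_trans (norm_nonneg _) (hvb z))
            simp [Prod.norm_def]
        _ = c₀ := mul_one _
    rw [wirtingerFst, norm_div]
    have h2' : ‖(2:ℂ)‖ = 2 := by norm_num
    rw [h2', div_le_iff₀ (by norm_num : (0:ℝ) < 2)]
    calc ‖((X : ℝ) : ℂ) - Complex.I * ((Y : ℝ) : ℂ)‖
        ≤ ‖((X : ℝ) : ℂ)‖ + ‖Complex.I * ((Y : ℝ) : ℂ)‖ := norm_sub_le _ _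
      _ = ‖X‖ + ‖Y‖ := by
          rw [norm_mul, Complex.norm_I, one_mul, Complex.norm_real, Complex.norm_real]
      _ ≤ c₀ + c₀ := add_le_add h1 h2
      _ = c₀ * 2 := by ring
  have hFbd : ∀ z, ‖F z‖ ≤ c₀ ^ 2 := by
    intro z
    have h0 : (0:ℝ) ≤ ‖wirtingerFst v z‖ := norm_nonneg _
    have := hWbd z
    rw [hFdef]
    simp only [Real.norm_eq_abs, abs_of_nonneg (pow_nonneg h0 2)]
    nlinarith
  -- E is measurable with finite volume
  have hEclosed : IsClosed E := by
    have h1 : IsClosed {z : ℂ × EuclideanSpace ℂ (Fin (n - 1)) |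
        infDist z.1 (segment ℝ a b) ≤ δ} :=
      isClosed_le ((continuous_infDist_pt _).comp continuous_fst) continuous_const
    have h2 : IsClosed {z : ℂ × EuclideanSpace ℂ (Fin (n - 1)) | ‖z.2 - z₀'‖ ≤ δ} :=
      isClosed_le ((continuous_snd.sub continuous_const).norm) continuous_const
    exact h1.inter h2
  have hEmeas : MeasurableSet E := hEclosed.measurableSet
  have hEsub : E ⊆ closedBall a (L + δ + 1) ×ˢ closedBall z₀' δ := by
    rintro ⟨z1, z2⟩ ⟨h1, h2⟩
    have hseg : (segment ℝ a b).Nonempty := ⟨a, left_mem_segment ℝ a b⟩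
    obtain ⟨p, hp, hdp⟩ := (infDist_lt_iff hseg).1 (lt_of_le_of_lt h1 (lt_add_one δ))
    have hpL : dist p a ≤ L := by
      have hmem : p ∈ closedBall a L := (convex_closedBall a L).segment_subset
        (mem_closedBall_self hL.le) (by rw [mem_closedBall, dist_comm]) hp
      exact mem_closedBall.1 hmem
    constructor
    · rw [mem_closedBall]
      calc dist z1 a ≤ dist z1 p + dist p a := dist_triangle _ _ _
        _ ≤ (δ + 1) + L := add_le_add hdp.le hpL
        _ = L + δ + 1 := by ring
    · rw [mem_closedBall, dist_eq_norm]; exact h2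
  have hEvol : volume E ≠ ⊤ := by
    have h1 : volume E ≤ volume (closedBall a (L + δ + 1) ×ˢ closedBall z₀' δ) :=
      measure_mono hEsub
    rw [Measure.volume_eq_prod, Measure.prod_prod] at h1
    exact (lt_of_le_of_lt h1 (ENNReal.mul_lt_top
      measure_closedBall_lt_top measure_closedBall_lt_top)).ne
  have hIntE : IntegrableOn F E := by
    apply Measure.integrableOn_of_bounded hEvol hFmeas.aestronglyMeasurable
    exact ae_of_all _ fun z => hFbd z
  -- pushforward
  have hmp := shear_measurePreserving (n - 1) a u hu0 hu
  rw [← hΦdef] at hmp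
  set S := A ×ˢ B with hSdef
  have himg : Φ '' S ⊆ E := by
    rintro p ⟨⟨⟨s, z'⟩, t⟩, ⟨⟨hs, hz'⟩, ht⟩, rfl⟩
    rw [hΦdef, shear_apply]
    constructor
    · have hp : a + u * (t : ℂ) ∈ segment ℝ a b := by
        rw [segment_eq_image']
        refine ⟨t / L, ⟨div_nonneg ht.1 hL.le, (div_le_one hL).2 ht.2⟩, ?_⟩
        show a + (t / L) • (b - a) = a + u * (t : ℂ)
        rw [Complex.real_smul]
        push_cast
        rw [hudef]
        field_simp
      refine le_trans (infDist_le_dist_of_mem hp) ?_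
      rw [dist_eq_norm]
      have heq : a + u * (↑t + ↑s * Complex.I) - (a + u * (t:ℂ)) = u * (↑s * Complex.I) := by
        ring
      rw [heq, norm_mul, hu, one_mul, norm_mul, Complex.norm_I, mul_one, Complex.norm_real,
        Real.norm_eq_abs]
      exact abs_le.mpr ⟨hs.1, hs.2⟩
    · rw [mem_closedBall, dist_eq_norm] at hz'
      exact hz'
  have hIntS : IntegrableOn (F ∘ Φ) S :=
    ((hmp.restrict_image_emb (MeasurableEquiv.measurableEmbedding _) S).integrable_comp_emb
      (MeasurableEquiv.measurableEmbedding _)).2 (hIntE.mono_set himg)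
  -- the key inner estimate
  have key1 : ∀ x ∈ A, c ^ 2 / (4 * L) ≤ ∫ t in B, F (Φ (x, t)) := by
    rintro ⟨s, z'⟩ ⟨hs, hz'⟩
    set q : ℝ → ℂ × EuclideanSpace ℂ (Fin (n - 1)) :=
      fun t => (a + u * ((t : ℂ) + (s : ℂ) * Complex.I), z') with hqdef
    set g : ℝ → ℝ := fun t => fderiv ℝ v (q t) ((u : ℂ), 0) with hgdef
    have hqc : Continuous q := by
      apply Continuous.prodMk _ continuous_const
      exact continuous_const.add (continuous_const.mul
        (Complex.continuous_ofReal.add continuous_const))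
    have hgm : Measurable g :=
      (measurable_fderiv_apply_const ℝ v ((u:ℂ), 0)).comp hqc.measurable
    have hgb : ∀ t, ‖g t‖ ≤ c₀ := by
      intro t
      calc ‖g t‖ ≤ ‖fderiv ℝ v (q t)‖ * ‖((u:ℂ), (0 : EuclideanSpace ℂ (Fin (n - 1))))‖ :=
            (fderiv ℝ v (q t)).le_opNorm _
        _ ≤ c₀ * 1 := by
            apply mul_le_mul (hvb (q t)) _ (norm_nonneg _)
              (le_trans (norm_nonneg (fderiv ℝ v (q t))) (hvb (q t)))
            simp [Prod.norm_def, hu]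
        _ = c₀ := mul_one _
    have hq' : ∀ t : ℝ, HasDerivAt q ((u : ℂ), (0 : EuclideanSpace ℂ (Fin (n - 1)))) t := by
      intro t
      have h1 : HasDerivAt (fun t : ℝ => (t : ℂ)) 1 t := by
        simpa using (hasDerivAt_id t).ofReal_comp
      have h2 := ((h1.add_const ((s : ℂ) * Complex.I)).const_mul u).const_add a
      rw [mul_one] at h2
      exact h2.prodMk (hasDerivAt_const t z')
    have hFTC : ∫ t in (0:ℝ)..L, g t = v (q L) - v (q 0) := by
      apply intervalIntegral.integral_eq_sub_of_hasDerivAt (f := fun t => v (q t))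
      · intro t _
        exact (hv (q t)).hasFDerivAt.comp_hasDerivAt t (hq' t)
      · rw [intervalIntegrable_iff]
        apply Measure.integrableOn_of_bounded _ hgm.aestronglyMeasurable (ae_of_all _ hgb)
        rw [Set.uIoc_of_le hL.le, Real.volume_Ioc]
        exact ENNReal.ofReal_ne_top
    -- endpoints
    have hq0 : q 0 - ((a, z₀') : ℂ × EuclideanSpace ℂ (Fin (n - 1)))
        = (u * ((s:ℂ) * Complex.I), z' - z₀') := by
      rw [hqdef]
      simp only [Prod.mk_sub_mk, Prod.mk.injEq]
      constructor
      · push_cast; ring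
      · trivial
    have hqL : q L - ((b, z₀') : ℂ × EuclideanSpace ℂ (Fin (n - 1)))
        = (u * ((s:ℂ) * Complex.I), z' - z₀') := by
      rw [hqdef]
      simp only [Prod.mk_sub_mk, Prod.mk.injEq]
      constructor
      · have hub : u * (L:ℂ) = b - a := by rw [hudef]; field_simp
        calc a + u * ((L : ℂ) + (s:ℂ) * Complex.I) - b
            = (u * (L:ℂ) - (b - a)) + u * ((s:ℂ) * Complex.I) := by ring
          _ = u * ((s:ℂ) * Complex.I) := by rw [hub]; ring
      · trivial
    have hdnorm : ‖((u * ((s:ℂ) * Complex.I), z' - z₀') :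
        ℂ × EuclideanSpace ℂ (Fin (n - 1)))‖ ≤ δ := by
      rw [Prod.norm_def]
      apply max_le
      · rw [norm_mul, hu, one_mul, norm_mul, Complex.norm_I, mul_one, Complex.norm_real,
          Real.norm_eq_abs]
        exact abs_le.mpr ⟨hs.1, hs.2⟩
      · rw [mem_closedBall, dist_eq_norm] at hz'
        exact hz'
    have hc₀δ : c₀ * δ = c / 4 := by
      rw [hδdef]; field_simp
    have hclose0 : |v (q 0) - v (a, z₀')| ≤ c / 4 := by
      calc |v (q 0) - v (a, z₀')| ≤ c₀ * ‖q 0 - ((a, z₀') :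
          ℂ × EuclideanSpace ℂ (Fin (n - 1)))‖ := hlip _ _
        _ ≤ c₀ * δ := by
            rw [hq0]
            exact mul_le_mul_of_nonneg_left hdnorm hc₀.le
        _ = c / 4 := hc₀δ
    have hcloseL : |v (q L) - v (b, z₀')| ≤ c / 4 := by
      calc |v (q L) - v (b, z₀')| ≤ c₀ * ‖q L - ((b, z₀') :
          ℂ × EuclideanSpace ℂ (Fin (n - 1)))‖ := hlip _ _
        _ ≤ c₀ * δ := by
            rw [hqL]
            exact mul_le_mul_of_nonneg_left hdnorm hc₀.le
        _ = c / 4 := hc₀δ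
    have hgap2 : c ≤ |v (q L) - v (q 0)| := by
      have h1 := abs_le.1 hclose0
      have h2 := abs_le.1 hcloseL
      apply le_abs.mpr
      right
      have : v (q L) - v (q 0) ≤ -c := by
        have := hgap
        linarith [h1.1, h1.2, h2.1, h2.2]
      linarith
    -- Cauchy–Schwarz
    haveI : IsFiniteMeasure (volume.restrict B) := by
      constructor
      rw [Measure.restrict_apply_univ]
      exact measure_Icc_lt_top
    have hBvol : volume B ≠ ⊤ := measure_Icc_lt_top.ne
    have hgint : IntegrableOn g B :=
      Measure.integrableOn_of_bounded hBvol hgm.aestronglyMeasurable (ae_of_all _ hgb)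
    have hg2int : IntegrableOn (fun t => g t ^ 2) B := by
      apply Measure.integrableOn_of_bounded hBvol
        ((hgm.pow_const 2).aestronglyMeasurable) (M := c₀ ^ 2)
      apply ae_of_all
      intro t
      have h := hgb t
      rw [Real.norm_eq_abs] at h
      rw [Real.norm_eq_abs, abs_of_nonneg (sq_nonneg _), ← sq_abs]
      exact pow_le_pow_left₀ (abs_nonneg _) h 2
    have hcs := sq_integral_le hgint hg2int
    have hμB : ((volume.restrict B) Set.univ).toReal = L := by
      rw [Measure.restrict_apply_univ, hBdef, Real.volume_Icc, sub_zero,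
        ENNReal.toReal_ofReal hL.le]
    have hIccInt : ∫ t in B, g t = v (q L) - v (q 0) := by
      rw [hBdef, integral_Icc_eq_integral_Ioc, ← intervalIntegral.integral_of_le hL.le, hFTC]
    have hmain : c ^ 2 / L ≤ ∫ t in B, g t ^ 2 := by
      rw [hμB] at hcs
      have h1 : c ^ 2 ≤ (v (q L) - v (q 0)) ^ 2 := by
        have h2 := pow_le_pow_left₀ hc.le hgap2 2
        rwa [sq_abs] at h2
      rw [hIccInt] at hcs
      rw [div_le_iff₀ hL]
      calc c ^ 2 ≤ L * ∫ t in B, g t ^ 2 := h1.trans hcs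
        _ = (∫ t in B, g t ^ 2) * L := mul_comm _ _
    have hpt : ∀ t ∈ B, g t ^ 2 / 4 ≤ F (Φ ((s, z'), t)) := by
      intro t _
      have hW := wirtinger_pointwise v (q t) u hu
      have happ : Φ ((s, z'), t) = q t := by
        rw [hΦdef, shear_apply, hqdef]
      rw [happ]
      rw [hFdef]
      simp only
      linarith
    have hFint : IntegrableOn (fun t => F (Φ ((s, z'), t))) B := by
      have heq : (fun t => F (Φ ((s, z'), t))) = fun t => F (q t) := by
        funext t
        rw [hΦdef, shear_apply, hqdef]
      rw [heq]
      apply Measure.integrableOn_of_bounded hBvol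
        ((hFmeas.comp hqc.measurable).aestronglyMeasurable)
      exact ae_of_all _ fun t => hFbd (q t)
    have hg4int : IntegrableOn (fun t => g t ^ 2 / 4) B := hg2int.div_const 4
    calc c ^ 2 / (4 * L) = (c ^ 2 / L) / 4 := by ring
      _ ≤ (∫ t in B, g t ^ 2) / 4 := by linarith
      _ = ∫ t in B, g t ^ 2 / 4 := (integral_div 4 _).symm
      _ ≤ ∫ t in B, F (Φ ((s, z'), t)) :=
          setIntegral_mono_on hg4int hFint measurableSet_Icc hpt
  -- Fubini and assembly
  have hAmeas : MeasurableSet A := measurableSet_Icc.prod measurableSet_closedBall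
  have hfinrank : Module.finrank ℝ (EuclideanSpace ℂ (Fin (n - 1))) = 2 * (n - 1) := by
    have h0 := Module.finrank_mul_finrank ℝ ℂ (EuclideanSpace ℂ (Fin (n - 1)))
    rw [Complex.finrank_real_complex, finrank_euclideanSpace_fin] at h0
    omega
  have hμA : volume A = ENNReal.ofReal (2 * δ)
      * (ENNReal.ofReal (δ ^ (2 * (n - 1))) * volume (ball (0 : EuclideanSpace ℂ
        (Fin (n - 1))) 1)) := by
    rw [hAdef, Measure.volume_eq_prod, Measure.prod_prod, Real.volume_Icc,
      Measure.addHaar_closedBall volume z₀' hδ.le, hfinrank]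
    congr 2
    ring
  have hAne : volume A ≠ ⊤ := by
    rw [hμA]
    exact (ENNReal.mul_lt_top ENNReal.ofReal_lt_top
      (ENNReal.mul_lt_top ENNReal.ofReal_lt_top hvolB_fin)).ne
  have hmarg : IntegrableOn (fun x => ∫ t in B, F (Φ (x, t))) A := by
    have h := hIntS
    rw [IntegrableOn, hSdef, Measure.volume_eq_prod, ← Measure.prod_restrict] at h
    exact h.integral_prod_left
  have step4 : (c ^ 2 / (4 * L)) * (volume A).toReal
      ≤ ∫ x in A, ∫ t in B, F (Φ (x, t)) :=
    by have := setIntegral_ge_of_const_le_real hAmeas hAne key1 hmarg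
       refine le_trans (le_of_eq ?_) this; simp only [smul_eq_mul, measureReal_def]
  have step3 : ∫ y in S, F (Φ y) = ∫ x in A, ∫ t in B, F (Φ (x, t)) := by
    rw [hSdef, Measure.volume_eq_prod]
    have h := hIntS
    rw [IntegrableOn, hSdef, Measure.volume_eq_prod] at h
    exact setIntegral_prod _ h
  have step2 : ∫ z in Φ '' S, F z = ∫ y in S, F (Φ y) :=
    hmp.setIntegral_image_emb (MeasurableEquiv.measurableEmbedding _) F S
  have step1 : ∫ z in Φ '' S, F z ≤ ∫ z in E, F z :=
    setIntegral_mono_set hIntE (ae_of_all _ fun z => sq_nonneg _) himg.eventuallyLE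
  -- arithmetic
  have htoReal : (volume A).toReal = (2 * δ) * (δ ^ (2 * (n - 1)) * VB) := by
    rw [hμA, ENNReal.toReal_mul, ENNReal.toReal_mul, ENNReal.toReal_ofReal (by positivity),
      ENNReal.toReal_ofReal (by positivity), hVB]
  have hexp : 2 * n - 1 = 2 * (n - 1) + 1 := by omega
  have harith : VB / 2 * δ ^ (2 * n - 1) * c ^ 2 / L
      = (c ^ 2 / (4 * L)) * ((2 * δ) * (δ ^ (2 * (n - 1)) * VB)) := by
    rw [hexp, pow_succ]
    field_simp
    ring
  calc VB / 2 * δ ^ (2 * n - 1) * c ^ 2 / L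
      = (c ^ 2 / (4 * L)) * (volume A).toReal := by rw [harith, htoReal]
    _ ≤ ∫ x in A, ∫ t in B, F (Φ (x, t)) := step4
    _ = ∫ y in S, F (Φ y) := step3.symm
    _ = ∫ z in Φ '' S, F z := step2.symm
    _ ≤ ∫ z in E, F z := step1
end
end
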